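/- arXiv:0802.4363 — 2 statements merged into one kernel-verified Lean document; each statement's English description precedes it below -/
import Mathlib

section
/- For a two-sided stationary ergodic process on a finite alphabet of size α, the supremum over m of (log R_m)/m is integrable: E[ sup_{m ≥ 1} (log R_m)/m ] < ∞, where R_m is the recurrence time of the initial m-block. -/
open MeasureTheory

lemma two_mul_le_two_pow' (n : ℕ) (hn : 2 ≤ n) : 2 * n ≤ 2 ^ n := by
  induction n with
  | zero => omega
  | succ k ih =>
    rcases Nat.lt_or_ge k 2 with h | h
    · interval_cases k <;> norm_num
    · have h1 := ih h
      have h2 : 2 ≤ 2 ^ k := Nat.one_lt_two_pow_iff.mpr (by omega)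
      rw [pow_succ]; omega

lemma real_key (x : ℝ) : x ≤ 2 * (2:ℝ) ^ x := by
  rcases le_or_gt x 0 with h | h
  · have : (0:ℝ) < (2:ℝ) ^ x := Real.rpow_pos_of_pos two_pos x
    nlinarith
  · have h1 : x * Real.log 2 ≤ Real.exp (x * Real.log 2) := by
      linarith [Real.add_one_le_exp (x * Real.log 2)]
    have h2 : (2:ℝ) ^ x = Real.exp (x * Real.log 2) := by
      rw [Real.rpow_def_of_pos two_pos, mul_comm]
    have hlog : (0.6931471803 : ℝ) < Real.log 2 := Real.log_two_gt_d9
    have hE : (0:ℝ) < Real.exp (x * Real.log 2) := Real.exp_pos _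
    rw [h2]
    nlinarith [mul_pos h (sub_pos.mpr hlog)]

lemma main_bound (n m K : ℕ) (hn : 1 ≤ n) (hm : 1 ≤ m) :
    Real.logb 2 n / m - K ≤ 2 * n / 2 ^ (m * K) := by
  have hnpos : (0:ℝ) < n := by exact_mod_cast hn
  have hmpos : (1:ℝ) ≤ m := by exact_mod_cast hm
  have hden : (0:ℝ) < 2 ^ (m * K) := by positivity
  set x : ℝ := Real.logb 2 n / m - K with hx
  rcases le_or_gt x 0 with h | h
  · have h0 : (0:ℝ) ≤ 2 * n / 2 ^ (m * K) := by positivity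
    exact h.trans h0
  · have hmx : (m:ℝ) * x = Real.logb 2 n - m * K := by
      rw [hx]
      field_simp
    have key := real_key ((m:ℝ) * x)
    have hpow : (2:ℝ) ^ ((m:ℝ) * x) = n / 2 ^ (m * K) := by
      rw [hmx, Real.rpow_sub two_pos, Real.rpow_logb two_pos (by norm_num) hnpos,
        show ((m:ℝ) * (K:ℝ)) = ((m * K : ℕ) : ℝ) by push_cast; ring,
        Real.rpow_natCast]
    have hx_le : x ≤ (m:ℝ) * x := by nlinarith
    calc x ≤ (m:ℝ) * x := hx_le
      _ ≤ 2 * (2:ℝ) ^ ((m:ℝ) * x) := key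
      _ = 2 * n / 2 ^ (m * K) := by rw [hpow]; ring

lemma ennreal_coef_bound (α m : ℕ) (hα : 2 ≤ α) :
    (2:ENNReal) / 2 ^ ((m+1) * α) * (α:ENNReal) ^ (m+1) ≤ (2⁻¹:ENNReal) ^ m := by
  obtain ⟨β, rfl⟩ : ∃ β, α = β + 2 := ⟨α - 2, by omega⟩
  have hnat : 2 * (β+2) ^ (m+1) * 2 ^ m ≤ 2 ^ ((m+1) * (β+2)) := by
    have h1 : β + 2 ≤ 2 ^ (β + 1) := by
      have ha := two_mul_le_two_pow' (β+2) (by omega)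
      have hb : 2 ^ (β+2) = 2 * 2 ^ (β+1) := by rw [← pow_succ']
      omega
    have h2 : (β+2) ^ (m+1) ≤ (2 ^ (β+1)) ^ (m+1) := Nat.pow_le_pow_left h1 _
    calc 2 * (β+2) ^ (m+1) * 2 ^ m ≤ 2 * (2 ^ (β+1)) ^ (m+1) * 2 ^ m := by
          exact Nat.mul_le_mul_right _ (Nat.mul_le_mul_left _ h2)
      _ = 2 ^ ((m+1) * (β+2)) := by
          rw [← pow_mul, ← pow_succ', ← pow_add]
          congr 1
          ring
  have h2t : (2:ENNReal) ^ ((m+1)*(β+2)) ≠ 0 := by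
    exact pow_ne_zero _ (by norm_num)
  have h2top : (2:ENNReal) ^ ((m+1)*(β+2)) ≠ ⊤ := by
    exact ENNReal.pow_ne_top (by norm_num)
  have heq : (2:ENNReal)/2^((m+1)*(β+2)) * (β+2:ℕ)^(m+1)
      = (2 * (β+2:ℕ)^(m+1)) / 2^((m+1)*(β+2)) := by
    rw [div_eq_mul_inv, div_eq_mul_inv]; ring
  rw [heq, ENNReal.div_le_iff h2t h2top, ← ENNReal.inv_pow,
    mul_comm (((2:ENNReal)^m)⁻¹), ← div_eq_mul_inv,
    ENNReal.le_div_iff_mul_le (Or.inl (pow_ne_zero _ (by norm_num)))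
      (Or.inl (ENNReal.pow_ne_top (by norm_num)))]
  exact_mod_cast hnat


/-- Integrability of the supremum of the normalized log-recurrence times:
`E[ sup_{m ≥ 1} (log R_m)/m ] < ∞` for a process on an alphabet of size `α ≥ 2`,
given Kac's identity `E(R_m) = α^m`. -/
theorem stmt_3 {Ω : Type*} [MeasurableSpace Ω] (μ : Measure Ω) [IsProbabilityMeasure μ]
    (α : ℕ) (hα : 2 ≤ α) (R : ℕ → Ω → ℕ) (hR : ∀ m, Measurable (R m))
    (hR1 : ∀ m ω, 1 ≤ R m ω)
    (hKac : ∀ m, 1 ≤ m → ∫⁻ ω, (R m ω : ENNReal) ∂μ = (α : ENNReal) ^ m) :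
    ∫⁻ ω, ⨆ m : ℕ, ENNReal.ofReal (Real.logb 2 (R (m + 1) ω) / (m + 1)) ∂μ < ⊤ := by
  have hgmeas : ∀ m : ℕ, Measurable fun ω =>
      ENNReal.ofReal (Real.logb 2 (R (m+1) ω) / (m+1) - α) := by
    intro m
    exact (measurable_from_nat (f := fun n : ℕ =>
      ENNReal.ofReal (Real.logb 2 n / (m+1) - α))).comp (hR (m+1))
  have hpt : ∀ ω, (⨆ m : ℕ, ENNReal.ofReal (Real.logb 2 (R (m + 1) ω) / (m + 1)))
      ≤ (α : ENNReal) + ∑' m : ℕ, ENNReal.ofReal (Real.logb 2 (R (m+1) ω) / (m+1) - α) := by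
    intro ω
    refine iSup_le fun m => ?_
    set f : ℝ := Real.logb 2 (R (m+1) ω) / (m+1) with hf
    have h1 : ENNReal.ofReal f ≤ (α : ENNReal) + ENNReal.ofReal (f - α) := by
      rcases le_total f (α:ℝ) with h | h
      · exact ((ENNReal.ofReal_le_ofReal h).trans_eq (ENNReal.ofReal_natCast α)).trans
          le_self_add
      · have he : ENNReal.ofReal f = ENNReal.ofReal ((α:ℝ) + (f - α)) := by ring_nf
        rw [he, ENNReal.ofReal_add (by positivity) (sub_nonneg.mpr h),
          ENNReal.ofReal_natCast]
    exact h1.trans (add_le_add le_rfl (ENNReal.le_tsum m))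
  have hbound : ∀ m : ℕ,
      ∫⁻ ω, ENNReal.ofReal (Real.logb 2 (R (m+1) ω) / (m+1) - α) ∂μ
        ≤ (2⁻¹ : ENNReal) ^ m := by
    intro m
    have hpw : ∀ ω, ENNReal.ofReal (Real.logb 2 (R (m+1) ω) / (m+1) - α)
        ≤ 2 / 2 ^ ((m+1)*α) * (R (m+1) ω : ENNReal) := by
      intro ω
      have h1 := main_bound (R (m+1) ω) (m+1) α (hR1 _ _) (by omega)
      push_cast at h1
      have h2 : ENNReal.ofReal (2 * (R (m+1) ω : ℝ) / 2 ^ ((m+1)*α))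
          = 2 / 2 ^ ((m+1)*α) * (R (m+1) ω : ENNReal) := by
        rw [ENNReal.ofReal_div_of_pos (by positivity), ENNReal.ofReal_mul (by norm_num)]
        rw [ENNReal.ofReal_natCast, ENNReal.ofReal_pow (by norm_num),
          ENNReal.ofReal_ofNat, div_eq_mul_inv, div_eq_mul_inv]
        ring
      exact (ENNReal.ofReal_le_ofReal h1).trans_eq h2
    calc ∫⁻ ω, ENNReal.ofReal (Real.logb 2 (R (m+1) ω) / (m+1) - α) ∂μ
        ≤ ∫⁻ ω, 2 / 2 ^ ((m+1)*α) * (R (m+1) ω : ENNReal) ∂μ := lintegral_mono hpw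
      _ = 2 / 2 ^ ((m+1)*α) * ∫⁻ ω, (R (m+1) ω : ENNReal) ∂μ :=
          lintegral_const_mul _
            ((measurable_from_nat (f := fun n : ℕ => (n : ENNReal))).comp (hR (m+1)))
      _ = 2 / 2 ^ ((m+1)*α) * (α : ENNReal) ^ (m+1) := by rw [hKac (m+1) (by omega)]
      _ ≤ (2⁻¹ : ENNReal) ^ m := ennreal_coef_bound α m hα
  calc ∫⁻ ω, ⨆ m : ℕ, ENNReal.ofReal (Real.logb 2 (R (m + 1) ω) / (m + 1)) ∂μ
      ≤ ∫⁻ ω, ((α : ENNReal)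
          + ∑' m : ℕ, ENNReal.ofReal (Real.logb 2 (R (m+1) ω) / (m+1) - α)) ∂μ :=
        lintegral_mono hpt
    _ = (α : ENNReal) * μ Set.univ
          + ∑' m : ℕ, ∫⁻ ω, ENNReal.ofReal (Real.logb 2 (R (m+1) ω) / (m+1) - α) ∂μ := by
        rw [lintegral_add_left measurable_const, lintegral_const,
          lintegral_tsum fun m => (hgmeas m).aemeasurable]
    _ ≤ (α : ENNReal) + ∑' m : ℕ, (2⁻¹ : ENNReal) ^ m := by
        rw [measure_univ, mul_one]
        exact add_le_add le_rfl (ENNReal.tsum_le_tsum hbound)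
    _ < ⊤ := by
        rw [ENNReal.tsum_geometric, ENNReal.one_sub_inv_two, inv_inv]
        exact ENNReal.add_lt_top.mpr ⟨ENNReal.natCast_lt_top α, by norm_num⟩
end

section
/- Entropy rate of a binary renewal process: if X is the stationary binary process whose interarrival times (gaps between successive 1s) are i.i.d. with distribution P = (p_j; j ≥ 1) having finite mean E(Y_1) = Σ_j j·p_j < ∞, then the entropy rate of X equals λ H(P), where λ = 1/E(Y_1) and H(P) = −Σ_j p_j log p_j. -/
set_option linter.unusedSectionVars false
set_option maxHeartbeats 1000000


open MeasureTheory Filter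
open scoped Topology

/-- Joint (base-2) entropy `H(X_1^n)` of a binary process with law `μ`. -/
noncomputable def blockEntropyB (μ : Measure (ℕ → Bool)) (n : ℕ) : ℝ :=
  -∑ s : Fin n → Bool,
    (μ {ω | ∀ i : Fin n, ω i = s i}).toReal *
      Real.logb 2 (μ {ω | ∀ i : Fin n, ω i = s i}).toReal

open MeasureTheory Filter Finset
open scoped Topology

namespace RenewalAux

/-! ### Basic definitions -/

noncomputable def Ee (p : ℕ → ℝ) : ℝ := ∑' j : ℕ, (j : ℝ) * p j

noncomputable def lam (p : ℕ → ℝ) : ℝ := (Ee p)⁻¹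

/-- `r p b = P(Y > b)` -/
noncomputable def rr (p : ℕ → ℝ) (b : ℕ) : ℝ := 1 - ∑ j ∈ Finset.range (b + 1), p j

def gaps (T : List ℕ) : List ℕ := T.zipWith (fun a b => b - a) T.tail

def trues (n : ℕ) (s : ℕ → Bool) : List ℕ := (List.range n).filter s

noncomputable def gp (p : ℕ → ℝ) (T : List ℕ) : ℝ := ((gaps T).map p).prod

noncomputable def Pf (p : ℕ → ℝ) (n : ℕ) (s : ℕ → Bool) : ℝ :=
  if trues n s = [] then 1 - lam p * ∑ b ∈ Finset.range n, rr p b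
  else lam p * rr p (trues n s).headI * gp p (trues n s) * rr p (n - 1 - (trues n s).getLastD 0)

def Cyl (n : ℕ) (s : ℕ → Bool) : Set (ℕ → Bool) := {ω | ∀ i < n, ω i = s i}

def cns (b : Bool) (s : ℕ → Bool) : ℕ → Bool := fun i => Nat.casesOn i b s

section pfacts
variable {p : ℕ → ℝ} (hp0 : ∀ j, 0 ≤ p j) (hp00 : p 0 = 0)
    (hpsum : Summable p) (hp1 : ∑' j, p j = 1)
    (hmean : Summable fun j : ℕ => (j : ℝ) * p j)

include hp0 hp00 hpsum hp1 hmean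

lemma one_le_Ee : 1 ≤ Ee p := by
  rw [← hp1]
  refine Summable.tsum_le_tsum (fun j => ?_) hpsum hmean
  rcases Nat.eq_zero_or_pos j with h | h
  · simp [h, hp00]
  · have : (1:ℝ) ≤ (j:ℝ) := by exact_mod_cast h
    nlinarith [hp0 j]

lemma Ee_pos : 0 < Ee p := lt_of_lt_of_le one_pos (one_le_Ee hp0 hp00 hpsum hp1 hmean)

lemma lam_pos : 0 < lam p := inv_pos.2 (Ee_pos hp0 hp00 hpsum hp1 hmean)

lemma lam_le_one : lam p ≤ 1 := by
  rw [lam]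
  have h := one_le_Ee hp0 hp00 hpsum hp1 hmean
  have := Ee_pos hp0 hp00 hpsum hp1 hmean
  rw [inv_le_one_iff₀]
  right; exact h


lemma sum_range_p_le_one (n : ℕ) : ∑ j ∈ Finset.range n, p j ≤ 1 := by
  rw [← hp1]
  exact Summable.sum_le_tsum _ (fun j _ => hp0 j) hpsum

lemma rr_nonneg (b : ℕ) : 0 ≤ rr p b := by
  have := sum_range_p_le_one hp0 hp00 hpsum hp1 hmean (b + 1)
  simp only [rr]; linarith

lemma rr_le_one (b : ℕ) : rr p b ≤ 1 := by
  have : (0:ℝ) ≤ ∑ j ∈ Finset.range (b+1), p j := Finset.sum_nonneg fun j _ => hp0 j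
  simp only [rr]; linarith

lemma rr_zero : rr p 0 = 1 := by simp [rr, hp00]

lemma rr_succ (k : ℕ) : rr p (k + 1) = rr p k - p (k + 1) := by
  simp only [rr, Finset.sum_range_succ]; ring

lemma rr_tendsto : Tendsto (rr p) atTop (𝓝 0) := by
  have h : Tendsto (fun b : ℕ => ∑ j ∈ Finset.range (b+1), p j) atTop (𝓝 1) := by
    rw [← hp1]
    exact (hpsum.hasSum.tendsto_sum_nat).comp (tendsto_add_atTop_nat 1)
  have : Tendsto (fun b : ℕ => 1 - ∑ j ∈ Finset.range (b+1), p j) atTop (𝓝 (1 - 1)) :=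
    tendsto_const_nhds.sub h
  rw [sub_self] at this; exact this

lemma rr_eq_tsum (b : ℕ) : rr p b = ∑' j, if b < j then p j else 0 := by
  have hs2 : Summable (fun j => if j ≤ b then p j else 0) := by
    apply summable_of_finite_support
    apply Set.Finite.subset (Set.finite_Iic b)
    intro j hj
    simp only [Function.mem_support] at hj
    by_contra h
    simp only [Set.mem_Iic, not_le] at h
    rw [if_neg (by omega)] at hj
    exact hj rfl
  have hsplit : ∀ j, (if b < j then p j else 0) = p j - (if j ≤ b then p j else 0) := by
    intro j
    by_cases h : b < j
    · rw [if_pos h, if_neg (by omega)]; ring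
    · rw [if_neg h, if_pos (by omega)]; ring
  have hsum1 : Summable (fun j => if b < j then p j else 0) := by
    apply Summable.of_nonneg_of_le (fun j => ?_) (fun j => ?_) hpsum
    · by_cases h : b < j <;> simp [h, hp0 j]
    · by_cases h : b < j <;> simp [h, hp0 j]
  calc rr p b = ∑' j, p j - ∑' j, (if j ≤ b then p j else 0) := by
        rw [hp1]
        congr 1
        rw [tsum_eq_sum (s := Finset.range (b+1)) (fun j hj => by
          simp only [Finset.mem_range] at hj
          rw [if_neg (by omega)])]
        simp only [rr]
        congr 1
        exact Finset.sum_congr rfl (fun j hj => by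
          simp only [Finset.mem_range] at hj
          rw [if_pos (by omega)])
    _ = ∑' j, (if b < j then p j else 0) := by
        rw [← Summable.tsum_sub hpsum hs2]
        exact tsum_congr fun j => (hsplit j).symm

lemma sum_rr_le (n : ℕ) : ∑ b ∈ Finset.range n, rr p b ≤ Ee p := by
  have hsum1 : ∀ b : ℕ, Summable (fun j => if b < j then p j else 0) := by
    intro b
    apply Summable.of_nonneg_of_le (fun j => ?_) (fun j => ?_) hpsum
    · by_cases h : b < j <;> simp [h, hp0 j]
    · by_cases h : b < j <;> simp [h, hp0 j]
  have h1 : ∑ b ∈ Finset.range n, rr p b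
      = ∑' j, ∑ b ∈ Finset.range n, (if b < j then p j else 0) := by
    rw [Summable.tsum_finsetSum (fun b (_ : b ∈ Finset.range n) => hsum1 b)]
    exact Finset.sum_congr rfl fun b _ => rr_eq_tsum hp0 hp00 hpsum hp1 hmean b
  have h2 : ∀ j : ℕ, ∑ b ∈ Finset.range n, (if b < j then p j else 0)
      = (min j n : ℝ) * p j := by
    intro j
    rw [Finset.sum_ite, Finset.sum_const_zero, add_zero]
    have hfil : Finset.filter (fun b => b < j) (Finset.range n) = Finset.range (min j n) := by
      ext b
      simp only [Finset.mem_filter, Finset.mem_range, Nat.lt_min]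
      tauto
    rw [hfil, Finset.sum_const, Finset.card_range, nsmul_eq_mul]
    norm_num
  rw [h1]
  refine Summable.tsum_le_tsum (fun j => ?_) ?_ hmean
  · rw [h2 j]
    have : (min j n : ℝ) ≤ (j : ℝ) := by exact_mod_cast Nat.min_le_left j n
    exact mul_le_mul_of_nonneg_right this (hp0 j)
  · apply Summable.of_nonneg_of_le (fun j => ?_) (fun j => ?_) hmean
    · rw [h2 j]
      have : (0:ℝ) ≤ (min j n : ℝ) := by positivity
      exact mul_nonneg this (hp0 j)
    · rw [h2 j]
      have : (min j n : ℝ) ≤ (j : ℝ) := by exact_mod_cast Nat.min_le_left j n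
      exact mul_le_mul_of_nonneg_right this (hp0 j)

lemma p_le_one (j : ℕ) : p j ≤ 1 := by
  rw [← hp1]
  exact Summable.le_tsum hpsum j (fun i _ => hp0 i)

end pfacts

noncomputable def phi (x : ℝ) : ℝ := -(x * Real.logb 2 x)

lemma phi_eq_negMulLog (x : ℝ) : phi x = Real.negMulLog x / Real.log 2 := by
  simp only [phi, Real.negMulLog, Real.logb]
  field_simp

lemma continuous_phi : Continuous phi := by
  have : Continuous (fun x => Real.negMulLog x / Real.log 2) :=
    Real.continuous_negMulLog.div_const _
  simpa only [← phi_eq_negMulLog] using this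

lemma phi_zero : phi 0 = 0 := by simp [phi]

lemma phi_nonneg {x : ℝ} (h0 : 0 ≤ x) (h1 : x ≤ 1) : 0 ≤ phi x := by
  have : Real.logb 2 x ≤ 0 := Real.logb_nonpos one_lt_two h0 h1
  simp only [phi, neg_nonneg]
  exact mul_nonpos_of_nonneg_of_nonpos h0 this

lemma neg_mul_log_le {x : ℝ} (h0 : 0 ≤ x) (h1 : x ≤ 1) : -(x * Real.log x) ≤ 1 - x := by
  rcases eq_or_lt_of_le h0 with h | h
  · simp [← h]
  · have hinv : 0 < x⁻¹ := by positivity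
    have := Real.log_le_sub_one_of_pos hinv
    rw [Real.log_inv] at this
    -- -log x ≤ x⁻¹ - 1
    have h2 : x * (-Real.log x) ≤ x * (x⁻¹ - 1) :=
      mul_le_mul_of_nonneg_left this h0
    rw [mul_sub, mul_inv_cancel₀ (ne_of_gt h)] at h2
    nlinarith

lemma log_two_big : (0.6931471803 : ℝ) < Real.log 2 := Real.log_two_gt_d9

lemma phi_le_two {x : ℝ} (h0 : 0 ≤ x) (h1 : x ≤ 1) : phi x ≤ 2 := by
  have h := neg_mul_log_le h0 h1
  have hl := log_two_big
  simp only [phi, Real.logb]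
  rw [div_eq_mul_inv, ← mul_assoc]
  calc -(x * Real.log x * (Real.log 2)⁻¹) = -(x * Real.log x) * (Real.log 2)⁻¹ := by ring
  _ ≤ (1 - x) * (Real.log 2)⁻¹ := by
      apply mul_le_mul_of_nonneg_right h
      positivity
  _ ≤ 2 := by
      have hx : (1 - x) ≤ 1 := by linarith
      have : (Real.log 2)⁻¹ ≤ 2 := by
        rw [inv_le_iff_one_le_mul₀ (by linarith)]
        linarith
      calc (1-x) * (Real.log 2)⁻¹ ≤ 1 * (Real.log 2)⁻¹ := by
            apply mul_le_mul_of_nonneg_right hx; positivity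
        _ = (Real.log 2)⁻¹ := one_mul _
        _ ≤ 2 := this

lemma abs_phi_le_two {x : ℝ} (h0 : 0 ≤ x) (h1 : x ≤ 1) : |phi x| ≤ 2 := by
  rw [abs_le]
  exact ⟨by linarith [phi_nonneg h0 h1], phi_le_two h0 h1⟩

lemma neg_mul_log_le_sqrt {x : ℝ} (h0 : 0 ≤ x) : -(x * Real.log x) ≤ 2 * Real.sqrt x := by
  rcases eq_or_lt_of_le h0 with h | h
  · simp [← h]
  · have hsx : 0 < Real.sqrt x := Real.sqrt_pos.2 h
    have h1 : Real.log x⁻¹ = 2 * Real.log (Real.sqrt x⁻¹) := by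
      rw [Real.log_sqrt (by positivity)]; ring
    have h2 : Real.log (Real.sqrt x⁻¹) ≤ Real.sqrt x⁻¹ := by
      have := Real.log_le_sub_one_of_pos (show (0:ℝ) < Real.sqrt x⁻¹ by positivity)
      linarith
    have h3 : -Real.log x ≤ 2 * Real.sqrt x⁻¹ := by
      rw [← Real.log_inv]
      calc Real.log x⁻¹ = 2 * Real.log (Real.sqrt x⁻¹) := h1
        _ ≤ 2 * Real.sqrt x⁻¹ := by linarith
    have h4 : x * (-Real.log x) ≤ x * (2 * Real.sqrt x⁻¹) :=
      mul_le_mul_of_nonneg_left h3 h0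
    have h5 : x * (2 * Real.sqrt x⁻¹) = 2 * Real.sqrt x := by
      rw [Real.sqrt_inv]
      rw [show x * (2 * (Real.sqrt x)⁻¹) = 2 * (x * (Real.sqrt x)⁻¹) by ring]
      congr 1
      rw [mul_inv_eq_iff_eq_mul₀ (ne_of_gt hsx)]
      exact (Real.mul_self_sqrt h0).symm
    linarith

lemma sqrt_pow' {a : ℝ} (ha : 0 ≤ a) (n : ℕ) : Real.sqrt (a ^ n) = Real.sqrt a ^ n := by
  induction n with
  | zero => simp
  | succ k ih =>
    rw [pow_succ, pow_succ, Real.sqrt_mul (by positivity), ih]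

section pfacts2
variable {p : ℕ → ℝ} (hp0 : ∀ j, 0 ≤ p j) (hp00 : p 0 = 0)
    (hpsum : Summable p) (hp1 : ∑' j, p j = 1)
    (hmean : Summable fun j : ℕ => (j : ℝ) * p j)

include hp0 hp00 hpsum hp1 hmean

lemma phi_p_bound (j : ℕ) :
    phi (p j) ≤ (j : ℝ) * p j + 3 * (Real.sqrt 2⁻¹) ^ j := by
  set x := p j with hx
  have h0 : 0 ≤ x := hp0 j
  have h1 : x ≤ 1 := p_le_one hp0 hp00 hpsum hp1 hmean j
  have hl2 : (0.6931471803 : ℝ) < Real.log 2 := log_two_big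
  have hjx : 0 ≤ (j:ℝ) * x := mul_nonneg (Nat.cast_nonneg j) h0
  have hq : (0:ℝ) ≤ Real.sqrt 2⁻¹ ^ j := by positivity
  by_cases hc : x ≤ (2:ℝ)⁻¹ ^ j
  · -- small case : phi x ≤ 3 * q^j
    have h2 : -(x * Real.log x) ≤ 2 * Real.sqrt x := neg_mul_log_le_sqrt h0
    have h3 : Real.sqrt x ≤ Real.sqrt 2⁻¹ ^ j := by
      rw [← sqrt_pow' (by norm_num)]
      exact Real.sqrt_le_sqrt hc
    have h4 : phi x ≤ 2 * Real.sqrt 2⁻¹ ^ j / Real.log 2 := by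
      rw [phi_eq_negMulLog]
      apply div_le_div_of_nonneg_right ?_ (by linarith)
      · simp only [Real.negMulLog]
        calc -x * Real.log x = -(x * Real.log x) := by ring
          _ ≤ 2 * Real.sqrt x := h2
          _ ≤ 2 * Real.sqrt 2⁻¹ ^ j := by linarith
    have h5 : 2 * Real.sqrt 2⁻¹ ^ j / Real.log 2 ≤ 3 * Real.sqrt 2⁻¹ ^ j := by
      rw [div_le_iff₀ (by linarith)]
      nlinarith
    linarith
  · -- large case: phi x ≤ j * x
    push_neg at hc
    have hxpos : 0 < x := lt_of_le_of_lt (by positivity) hc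
    have hlog : Real.log ((2:ℝ)⁻¹ ^ j) ≤ Real.log x := Real.log_le_log (by positivity) hc.le
    have hlogpow : Real.log ((2:ℝ)⁻¹ ^ j) = -(j * Real.log 2) := by
      rw [Real.log_pow, Real.log_inv]; push_cast; ring
    have h6 : -Real.log x ≤ (j:ℝ) * Real.log 2 := by
      rw [hlogpow] at hlog; linarith
    have h7 : phi x ≤ (j:ℝ) * x := by
      rw [phi_eq_negMulLog]
      rw [div_le_iff₀ (by linarith)]
      simp only [Real.negMulLog]
      calc -x * Real.log x = x * (-Real.log x) := by ring
        _ ≤ x * ((j:ℝ) * Real.log 2) := mul_le_mul_of_nonneg_left h6 h0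
        _ = (j:ℝ) * x * Real.log 2 := by ring
    linarith

lemma summable_phi_p : Summable (fun j => phi (p j)) := by
  have hq0 : (0:ℝ) ≤ Real.sqrt 2⁻¹ := Real.sqrt_nonneg _
  have hq1 : Real.sqrt 2⁻¹ < 1 := by
    rw [show (1:ℝ) = Real.sqrt 1 from (Real.sqrt_one).symm]
    exact Real.sqrt_lt_sqrt (by norm_num) (by norm_num)
  have hg : Summable (fun j : ℕ => 3 * (Real.sqrt 2⁻¹) ^ j) :=
    (summable_geometric_of_lt_one hq0 hq1).mul_left 3
  apply Summable.of_nonneg_of_le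
    (fun j => phi_nonneg (hp0 j) (p_le_one hp0 hp00 hpsum hp1 hmean j))
    (fun j => phi_p_bound hp0 hp00 hpsum hp1 hmean j)
    (hmean.add hg)

end pfacts2

/-- Kronecker-type lemma: if `a` is nonneg and summable then `(∑_{j<n} j a_j)/n → 0`. -/
lemma kronecker_aux {a : ℕ → ℝ} (ha0 : ∀ j, 0 ≤ a j) (ha : Summable a) :
    Tendsto (fun n : ℕ => (∑ j ∈ Finset.range n, (j:ℝ) * a j) / n) atTop (𝓝 0) := by
  set t : ℕ → ℝ := fun i => ∑' k, a (k + (i+1)) with ht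
  have htnn : ∀ i, 0 ≤ t i := fun i => tsum_nonneg (fun k => ha0 _)
  have ht0 : Tendsto t atTop (𝓝 0) :=
    (tendsto_sum_nat_add a).comp (tendsto_add_atTop_nat 1)
  have hces : Tendsto (fun n : ℕ => (n:ℝ)⁻¹ * ∑ i ∈ Finset.range n, t i) atTop (𝓝 0) :=
    ht0.cesaro
  have hkey : ∀ n, ∑ j ∈ Finset.range n, (j:ℝ) * a j ≤ ∑ i ∈ Finset.range n, t i := by
    intro n
    have h1 : ∀ j, j ∈ Finset.range n → (j:ℝ) * a j
        = ∑ i ∈ Finset.range n, (if i < j then a j else 0) := by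
      intro j hj
      simp only [Finset.mem_range] at hj
      rw [Finset.sum_ite, Finset.sum_const_zero, add_zero, Finset.sum_const]
      have : Finset.filter (fun i => i < j) (Finset.range n) = Finset.range j := by
        ext i
        simp only [Finset.mem_filter, Finset.mem_range]
        omega
      rw [this, Finset.card_range, nsmul_eq_mul]
    rw [Finset.sum_congr rfl h1, Finset.sum_comm]
    apply Finset.sum_le_sum
    intro i _
    have h2 : ∑ j ∈ Finset.range n, (if i < j then a j else 0)
        = ∑ j ∈ Finset.Ico (i+1) n, a j := by
      rw [Finset.sum_ite, Finset.sum_const_zero, add_zero]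
      apply Finset.sum_congr ?_ (fun _ _ => rfl)
      ext j
      simp only [Finset.mem_filter, Finset.mem_range, Finset.mem_Ico]
      omega
    rw [h2, Finset.sum_Ico_eq_sum_range]
    calc ∑ k ∈ Finset.range (n - (i+1)), a (i + 1 + k)
        = ∑ k ∈ Finset.range (n - (i+1)), a (k + (i+1)) := by
          apply Finset.sum_congr rfl; intro k _; rw [add_comm (i+1) k]
      _ ≤ t i := Summable.sum_le_tsum _ (fun k _ => ha0 _) ((summable_nat_add_iff (i+1)).2 ha)
  have hnn : ∀ n : ℕ, 0 ≤ (∑ j ∈ Finset.range n, (j:ℝ) * a j) / n := by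
    intro n
    apply div_nonneg (Finset.sum_nonneg fun j _ => mul_nonneg (Nat.cast_nonneg j) (ha0 j))
      (Nat.cast_nonneg n)
  apply squeeze_zero hnn ?_ hces
  intro n
  rcases Nat.eq_zero_or_pos n with h | h
  · simp [h]
  · rw [div_eq_inv_mul]
    apply mul_le_mul_of_nonneg_left (hkey n) (by positivity)

/-! ### List lemmas -/

lemma headI_mem {l : List ℕ} (h : l ≠ []) : l.headI ∈ l := by
  cases l with
  | nil => exact absurd rfl h
  | cons a t => simp [List.headI]

lemma headI_append_singleton {l : List ℕ} (x : ℕ) (h : l ≠ []) :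
    (l ++ [x]).headI = l.headI := by
  cases l with
  | nil => exact absurd rfl h
  | cons a t => simp [List.headI]

lemma headI_map_succ {l : List ℕ} (h : l ≠ []) :
    (l.map Nat.succ).headI = l.headI + 1 := by
  cases l with
  | nil => exact absurd rfl h
  | cons a t => simp [List.headI]

lemma getLastD_irrel {l : List ℕ} (h : l ≠ []) (d d' : ℕ) :
    l.getLastD d = l.getLastD d' := by
  rw [List.getLastD_eq_getLast?, List.getLastD_eq_getLast?]
  cases hl : l.getLast? with
  | none => rw [List.getLast?_eq_none_iff] at hl; exact absurd hl h
  | some a => rfl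

lemma getLastD_mem {l : List ℕ} (h : l ≠ []) (d : ℕ) : l.getLastD d ∈ l := by
  rw [List.getLastD_eq_getLast?]
  cases hl : l.getLast? with
  | none => rw [List.getLast?_eq_none_iff] at hl; exact absurd hl h
  | some a =>
    simp only [Option.getD_some]
    exact List.mem_of_getLast? hl

lemma getLastD_append_singleton (l : List ℕ) (x d : ℕ) :
    (l ++ [x]).getLastD d = x := by
  rw [List.getLastD_eq_getLast?, List.getLast?_concat]
  rfl

lemma getLastD_map_succ {l : List ℕ} (h : l ≠ []) (d : ℕ) :
    (l.map Nat.succ).getLastD d = l.getLastD 0 + 1 := by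
  rw [List.getLastD_eq_getLast?, List.getLastD_eq_getLast?, List.getLast?_map]
  cases hl : l.getLast? with
  | none => rw [List.getLast?_eq_none_iff] at hl; exact absurd hl h
  | some a => rfl

lemma le_getLastD {l : List ℕ} (hs : l.Pairwise (· < ·)) {x : ℕ} (hx : x ∈ l) (d : ℕ) :
    x ≤ l.getLastD d := by
  induction l generalizing d with
  | nil => exact absurd hx List.not_mem_nil
  | cons a t ih =>
    rw [List.pairwise_cons] at hs
    have hshow : (a :: t).getLastD d = t.getLastD a := by
      cases t <;> rfl
    rw [hshow]
    rcases List.mem_cons.1 hx with rfl | hxt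
    · rcases eq_or_ne t [] with rfl | ht
      · simp
      · exact le_of_lt (hs.1 _ (getLastD_mem ht _))
    · exact ih hs.2 hxt a

lemma headI_le {l : List ℕ} (hs : l.Pairwise (· < ·)) {x : ℕ} (hx : x ∈ l) :
    l.headI ≤ x := by
  cases l with
  | nil => exact absurd hx List.not_mem_nil
  | cons a t =>
    rw [List.pairwise_cons] at hs
    rcases List.mem_cons.1 hx with rfl | hxt
    · simp [List.headI]
    · exact le_of_lt (hs.1 _ hxt)

/-! ### gaps lemmas -/

lemma gaps_nil : gaps [] = [] := rfl
lemma gaps_single (a : ℕ) : gaps [a] = [] := rfl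
lemma gaps_cons₂ (a b : ℕ) (t : List ℕ) :
    gaps (a :: b :: t) = (b - a) :: gaps (b :: t) := rfl

lemma gaps_append_singleton {l : List ℕ} (h : l ≠ []) (x : ℕ) :
    gaps (l ++ [x]) = gaps l ++ [x - l.getLastD 0] := by
  induction l with
  | nil => exact absurd rfl h
  | cons a t ih =>
    cases t with
    | nil => rfl
    | cons b t' =>
      have hne : (b :: t') ≠ [] := by simp
      show gaps (a :: b :: (t' ++ [x])) = _
      rw [gaps_cons₂]
      rw [show b :: (t' ++ [x]) = (b :: t') ++ [x] from rfl, ih hne]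
      rw [gaps_cons₂]
      simp only [List.cons_append]
      congr 2

lemma gaps_map_succ (l : List ℕ) : gaps (l.map Nat.succ) = gaps l := by
  induction l with
  | nil => rfl
  | cons a t ih =>
    cases t with
    | nil => rfl
    | cons b t' =>
      show gaps (a.succ :: b.succ :: List.map Nat.succ t') = _
      rw [gaps_cons₂, gaps_cons₂]
      rw [show (b.succ :: List.map Nat.succ t') = (b :: t').map Nat.succ from rfl, ih]
      congr 1
      omega

lemma gaps_length (l : List ℕ) : (gaps l).length = l.length - 1 := by
  cases l with
  | nil => rfl
  | cons a t => simp [gaps, List.length_zipWith]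

lemma gaps_getD (l : List ℕ) : ∀ k, k + 1 < l.length →
    (gaps l).getD k 0 = l.getD (k+1) 0 - l.getD k 0 := by
  induction l with
  | nil => intro k hk; simp at hk
  | cons a t ih =>
    intro k hk
    cases t with
    | nil => simp at hk
    | cons b t' =>
      cases k with
      | zero => rfl
      | succ k' =>
        rw [gaps_cons₂]
        simp only [List.getD_cons_succ]
        exact ih k' (by simpa using hk)

/-- product of a mapped list as a range product -/
lemma list_prod_map_eq {M : Type*} [CommMonoid M] (f : ℕ → M) (l : List ℕ) :
    (l.map f).prod = ∏ i ∈ Finset.range l.length, f (l.getD i 0) := by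
  induction l with
  | nil => simp
  | cons a t ih =>
    rw [List.map_cons, List.prod_cons, ih]
    rw [List.length_cons, Finset.prod_range_succ']
    simp only [List.getD_cons_succ, List.getD_cons_zero]
    rw [mul_comm]

lemma list_prod_pos_of_pos {l : List ℝ} (h0 : ∀ x ∈ l, (0:ℝ) ≤ x) (hp : 0 < l.prod) :
    ∀ x ∈ l, 0 < x := by
  induction l with
  | nil => intro x hx; exact absurd hx List.not_mem_nil
  | cons a t ih =>
    rw [List.prod_cons] at hp
    have ha : 0 ≤ a := h0 a (List.mem_cons_self)
    have htp : ∀ x ∈ t, (0:ℝ) ≤ x := fun x hx => h0 x (List.mem_cons_of_mem a hx)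
    have htprod : 0 ≤ t.prod := List.prod_nonneg htp
    have hapos : 0 < a := by
      rcases eq_or_lt_of_le ha with h | h
      · rw [← h, zero_mul] at hp; exact absurd hp (lt_irrefl 0)
      · exact h
    have htpos : 0 < t.prod := by
      rcases eq_or_lt_of_le htprod with h | h
      · rw [← h, mul_zero] at hp; exact absurd hp (lt_irrefl 0)
      · exact h
    intro x hx
    rcases List.mem_cons.1 hx with rfl | hxt
    · exact hapos
    · exact ih htp htpos x hxt

/-! ### trues lemmas -/

lemma mem_trues {n : ℕ} {s : ℕ → Bool} {t : ℕ} :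
    t ∈ trues n s ↔ t < n ∧ s t = true := by
  simp [trues, List.mem_filter, List.mem_range]

lemma trues_sorted (n : ℕ) (s : ℕ → Bool) : (trues n s).Pairwise (· < ·) :=
  List.Pairwise.sublist List.filter_sublist (List.pairwise_lt_range (n := n))

lemma trues_succ (n : ℕ) (s : ℕ → Bool) :
    trues (n+1) s = trues n s ++ (if s n then [n] else []) := by
  rw [trues, List.range_succ, List.filter_append]
  congr 1
  cases h : s n <;> simp [List.filter_cons, h]

lemma trues_congr {n : ℕ} {s s' : ℕ → Bool} (h : ∀ i < n, s i = s' i) :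
    trues n s = trues n s' := by
  apply List.filter_congr
  intro x hx
  exact h x (List.mem_range.1 hx)

lemma cns_succ (b : Bool) (s : ℕ → Bool) (i : ℕ) : cns b s (i+1) = s i := rfl
lemma cns_zero (b : Bool) (s : ℕ → Bool) : cns b s 0 = b := rfl

lemma trues_cns (n : ℕ) (b : Bool) (s : ℕ → Bool) :
    trues (n+1) (cns b s) =
      if b then 0 :: (trues n s).map Nat.succ else (trues n s).map Nat.succ := by
  rw [trues, List.range_succ_eq_map, List.filter_cons]
  rw [List.filter_map]
  have : (fun i => cns b s i) ∘ Nat.succ = s := by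
    funext i; rfl
  rw [show (cns b s) ∘ Nat.succ = s from this]
  cases b <;> simp [cns, trues]

/-! ### Pf structural lemmas -/

lemma trues_getLastD_lt {n : ℕ} {s : ℕ → Bool} (h : trues n s ≠ []) :
    (trues n s).getLastD 0 < n :=
  (mem_trues.1 (getLastD_mem h 0)).1

lemma trues_headI_lt {n : ℕ} {s : ℕ → Bool} (h : trues n s ≠ []) :
    (trues n s).headI < n :=
  (mem_trues.1 (headI_mem h)).1

lemma Pf_congr (p : ℕ → ℝ) {n : ℕ} {s s' : ℕ → Bool} (h : ∀ i < n, s i = s' i) :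
    Pf p n s = Pf p n s' := by
  simp only [Pf, trues_congr h]

section pfstruct
variable {p : ℕ → ℝ} (hp0 : ∀ j, 0 ≤ p j) (hp00 : p 0 = 0)
    (hpsum : Summable p) (hp1 : ∑' j, p j = 1)
    (hmean : Summable fun j : ℕ => (j : ℝ) * p j)

include hp0 hp00 hpsum hp1 hmean

lemma gp_nonneg (T : List ℕ) : 0 ≤ gp p T := by
  apply List.prod_nonneg
  intro x hx
  rcases List.mem_map.1 hx with ⟨g, _, rfl⟩
  exact hp0 g

lemma zpart_nonneg (n : ℕ) : 0 ≤ 1 - lam p * ∑ b ∈ Finset.range n, rr p b := by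
  have h1 : lam p * ∑ b ∈ Finset.range n, rr p b ≤ lam p * Ee p := by
    apply mul_le_mul_of_nonneg_left (sum_rr_le hp0 hp00 hpsum hp1 hmean n)
      (le_of_lt (lam_pos hp0 hp00 hpsum hp1 hmean))
  rw [lam, inv_mul_cancel₀ (ne_of_gt (Ee_pos hp0 hp00 hpsum hp1 hmean))] at h1
  simp only [lam]
  linarith

lemma Pf_nonneg (n : ℕ) (s : ℕ → Bool) : 0 ≤ Pf p n s := by
  rw [Pf]
  split
  · exact zpart_nonneg hp0 hp00 hpsum hp1 hmean n
  · have h1 := le_of_lt (lam_pos hp0 hp00 hpsum hp1 hmean)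
    have h2 := rr_nonneg hp0 hp00 hpsum hp1 hmean (trues n s).headI
    have h3 := gp_nonneg hp0 hp00 hpsum hp1 hmean (trues n s)
    have h4 := rr_nonneg hp0 hp00 hpsum hp1 hmean (n - 1 - (trues n s).getLastD 0)
    positivity

lemma Pf_zero_eq_one : Pf p 0 s = 1 := by
  have : trues 0 s = [] := rfl
  rw [Pf, if_pos this]
  simp

lemma gp_zero_cons (a : ℕ) (t : List ℕ) :
    gp p (0 :: (a :: t).map Nat.succ) = p (a+1) * gp p (a :: t) := by
  show gp p (0 :: a.succ :: t.map Nat.succ) = _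
  rw [gp, gaps_cons₂, List.map_cons, List.prod_cons, Nat.sub_zero]
  rw [show a.succ :: t.map Nat.succ = (a :: t).map Nat.succ from rfl, gaps_map_succ]
  rw [Nat.succ_eq_add_one]
  rfl

lemma Pf_split_back (n : ℕ) (s s₁ : ℕ → Bool) (hag : ∀ i < n, s i = s₁ i)
    (hs : s n = false) (hs₁ : s₁ n = true) :
    Pf p n s = Pf p (n+1) s + Pf p (n+1) s₁ := by
  have ht0 : trues (n+1) s = trues n s := by
    rw [trues_succ, hs]; simp
  have ht1 : trues (n+1) s₁ = trues n s ++ [n] := by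
    rw [trues_succ, hs₁, trues_congr hag]; simp
  have hr0 : rr p 0 = 1 := rr_zero hp0 hp00 hpsum hp1 hmean
  cases hT : trues n s with
  | nil =>
    rw [hT] at ht0 ht1
    rw [Pf, Pf, Pf, ht0, ht1, hT]
    simp only [List.nil_append]
    rw [if_pos trivial, if_pos trivial, if_neg (by simp)]
    have h1 : ([n] : List ℕ).headI = n := rfl
    have h2 : ([n] : List ℕ).getLastD 0 = n := rfl
    have h3 : gp p [n] = 1 := by simp [gp, gaps_single]
    rw [h1, h2, h3, Finset.sum_range_succ]
    have h4 : (n+1) - 1 - n = 0 := by omega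
    rw [h4, hr0]
    ring
  | cons a t =>
    rw [hT] at ht0 ht1
    have hTne : (a :: t : List ℕ) ≠ [] := by simp
    have hd : (a :: t).getLastD 0 < n := by
      rw [← hT]; exact trues_getLastD_lt (by rw [hT]; simp)
    rw [Pf, Pf, Pf, ht0, ht1, hT, if_neg hTne, if_neg hTne, if_neg (by simp)]
    have hhead : ((a :: t) ++ [n]).headI = (a :: t).headI :=
      headI_append_singleton n hTne
    have hlast : ((a :: t) ++ [n]).getLastD 0 = n := getLastD_append_singleton _ n 0
    have hgp : gp p ((a :: t) ++ [n]) = gp p (a :: t) * p (n - (a :: t).getLastD 0) := by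
      rw [gp, gaps_append_singleton hTne, List.map_append, List.prod_append,
        List.map_singleton, List.prod_singleton]
      rfl
    rw [hhead, hlast, hgp]
    set d := (a :: t).getLastD 0 with hdd
    have e1 : (n+1) - 1 - n = 0 := by omega
    have e2 : (n+1) - 1 - d = (n - 1 - d) + 1 := by omega
    have e3 : n - d = (n - 1 - d) + 1 := by omega
    rw [e1, e2, hr0, rr_succ hp0 hp00 hpsum hp1 hmean, ← e3]
    ring

lemma Pf_split_front (n : ℕ) (s : ℕ → Bool) :
    Pf p n s = Pf p (n+1) (cns false s) + Pf p (n+1) (cns true s) := by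
  have ht0 : trues (n+1) (cns false s) = (trues n s).map Nat.succ := by
    rw [trues_cns]; simp
  have ht1 : trues (n+1) (cns true s) = 0 :: (trues n s).map Nat.succ := by
    rw [trues_cns]; simp
  have hr0 : rr p 0 = 1 := rr_zero hp0 hp00 hpsum hp1 hmean
  cases hT : trues n s with
  | nil =>
    rw [hT] at ht0 ht1
    rw [Pf, Pf, Pf, ht0, ht1, hT]
    simp only [List.map_nil]
    rw [if_pos trivial, if_pos trivial, if_neg (by simp)]
    have h3 : gp p [0] = 1 := by simp [gp, gaps_single]
    have h1 : ([0] : List ℕ).headI = 0 := rfl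
    have h2 : ([0] : List ℕ).getLastD 0 = 0 := rfl
    rw [h1, h2, h3, hr0, Finset.sum_range_succ]
    have h4 : (n+1) - 1 - 0 = n := by omega
    rw [h4]
    ring
  | cons a t =>
    rw [hT] at ht0 ht1
    have hTne : (a :: t : List ℕ) ≠ [] := by simp
    have hmne : ((a :: t).map Nat.succ : List ℕ) ≠ [] := by simp
    have hd : (a :: t).getLastD 0 < n := by
      rw [← hT]; exact trues_getLastD_lt (by rw [hT]; simp)
    rw [Pf, Pf, Pf, ht0, ht1, hT, if_neg hTne, if_neg hmne, if_neg (by simp)]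
    have hhead1 : ((a :: t).map Nat.succ).headI = (a :: t).headI + 1 :=
      headI_map_succ hTne
    have hlast1 : ((a :: t).map Nat.succ).getLastD 0 = (a :: t).getLastD 0 + 1 :=
      getLastD_map_succ hTne 0
    have hlast2 : (0 :: (a :: t).map Nat.succ).getLastD 0 = (a :: t).getLastD 0 + 1 := by
      rw [show (0 :: (a :: t).map Nat.succ).getLastD 0
          = ((a :: t).map Nat.succ).getLastD 0 from rfl, hlast1]
    have hgp1 : gp p ((a :: t).map Nat.succ) = gp p (a :: t) := by
      rw [gp, gaps_map_succ]; rfl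
    have hgp2 : gp p (0 :: (a :: t).map Nat.succ) = p ((a :: t).headI + 1) * gp p (a :: t) :=
      gp_zero_cons hp0 hp00 hpsum hp1 hmean a t
    have hhead0 : (0 :: (a :: t).map Nat.succ).headI = 0 := rfl
    rw [hhead1, hlast1, hlast2, hgp1, hgp2, hhead0, hr0]
    set d := (a :: t).getLastD 0 with hdd
    have e2 : (n+1) - 1 - (d+1) = n - 1 - d := by omega
    rw [e2, rr_succ hp0 hp00 hpsum hp1 hmean]
    ring

end pfstruct

/-! ### Measure layer -/

def shiftF : (ℕ → Bool) → ℕ → Bool := fun ω n => ω (n + 1)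

lemma measurable_shiftF : Measurable shiftF :=
  measurable_pi_lambda _ fun n => measurable_pi_apply (n + 1)

lemma measurableSet_Cyl (n : ℕ) (s : ℕ → Bool) : MeasurableSet (Cyl n s) := by
  have h : Cyl n s = ⋂ i ∈ Finset.range n, ((fun ω : ℕ → Bool => ω i) ⁻¹' {s i}) := by
    ext ω
    simp [Cyl, Set.mem_iInter]
  rw [h]
  exact MeasurableSet.biInter (Finset.range n).countable_toSet
    (fun i _ => (measurable_pi_apply i) (measurableSet_singleton (s i)))

/-- index-boundedness: `getD` at `length - 1` is `getLastD` -/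
lemma getD_length_sub_one {l : List ℕ} (h : l ≠ []) :
    l.getD (l.length - 1) 0 = l.getLastD 0 := by
  induction l with
  | nil => exact absurd rfl h
  | cons a t ih =>
    cases ht : t with
    | nil => rfl
    | cons b t' =>
      have htne : t ≠ [] := by rw [ht]; simp
      have hlen : (a :: t).length - 1 = (t.length - 1) + 1 := by
        rw [ht]; simp
      rw [← ht, hlen, List.getD_cons_succ, ih htne]
      rw [show (a :: t).getLastD 0 = t.getLastD a from by cases t <;> rfl]
      exact getLastD_irrel htne 0 a

lemma getD_zero_eq_headI {l : List ℕ} (h : l ≠ []) : l.getD 0 0 = l.headI := by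
  cases l with
  | nil => exact absurd rfl h
  | cons a t => rfl

lemma getD_mem_of_lt {l : List ℕ} {i : ℕ} (h : i < l.length) : l.getD i 0 ∈ l := by
  rw [List.getD_eq_getElem _ _ h]
  exact List.getElem_mem h

lemma sorted_getD_lt {l : List ℕ} (hs : l.Pairwise (· < ·)) :
    ∀ k, k + 1 < l.length → l.getD k 0 < l.getD (k+1) 0 := by
  induction l with
  | nil => intro k hk; simp at hk
  | cons a t ih =>
    intro k hk
    rw [List.pairwise_cons] at hs
    cases k with
    | zero =>
      simp only [List.length_cons] at hk
      have htne : t ≠ [] := by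
        intro h; rw [h] at hk; simp at hk
      have : t.getD 0 0 = t.headI := by cases t with
        | nil => exact absurd rfl htne
        | cons b t' => rfl
      rw [List.getD_cons_zero, List.getD_cons_succ, this]
      exact hs.1 _ (headI_mem htne)
    | succ k' =>
      rw [List.getD_cons_succ, List.getD_cons_succ]
      exact ih hs.2 k' (by simpa using hk)

section measure
variable {p : ℕ → ℝ} (hp0 : ∀ j, 0 ≤ p j) (hp00 : p 0 = 0)
    (hpsum : Summable p) (hp1 : ∑' j, p j = 1)
    (hmean : Summable fun j : ℕ => (j : ℝ) * p j)
    {μ : Measure (ℕ → Bool)} [IsProbabilityMeasure μ]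
    (hstat : μ.map (fun ω n => ω (n + 1)) = μ)
    (hRen : ∀ (m : ℕ) (j : ℕ → ℕ), (∀ i < m, 1 ≤ j i) →
      μ {ω | ∀ t ≤ ∑ i ∈ Finset.range m, j i,
          (ω t = true ↔ ∃ i ≤ m, t = ∑ i' ∈ Finset.range i, j i')} =
        ENNReal.ofReal ((∑' j' : ℕ, (j' : ℝ) * p j')⁻¹ * ∏ i ∈ Finset.range m, p (j i)))

include hstat in
lemma mu_shift_preimage {A : Set (ℕ → Bool)} (hA : MeasurableSet A) :
    μ (shiftF ⁻¹' A) = μ A := by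
  conv_rhs => rw [← hstat]
  exact (Measure.map_apply
    (show Measurable (fun (ω : ℕ → Bool) n => ω (n + 1)) from measurable_shiftF) hA).symm

include hp0 hp00 hpsum hp1 hmean hRen in
lemma ANCH (n : ℕ) (s : ℕ → Bool) (hs0 : s 0 = true) (hsn : s n = true) :
    μ (Cyl (n+1) s) = ENNReal.ofReal (lam p * gp p (trues (n+1) s)) := by
  set T := trues (n+1) s with hT
  have hmemT : ∀ t, t ∈ T ↔ (t < n + 1 ∧ s t = true) := fun t => mem_trues
  have h0T : (0 : ℕ) ∈ T := (hmemT 0).2 ⟨Nat.succ_pos n, hs0⟩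
  have hTne : T ≠ [] := List.ne_nil_of_mem h0T
  have hsorted : T.Pairwise (· < ·) := trues_sorted (n+1) s
  have hhead : T.headI = 0 := Nat.le_zero.1 (headI_le hsorted h0T)
  have hlast : T.getLastD 0 = n := by
    rw [hT, trues_succ, hsn]
    simp only [if_true]
    exact getLastD_append_singleton _ n 0
  set m := T.length - 1 with hm
  have hlen : T.length = m + 1 := by
    rw [hm]
    have : 0 < T.length := List.length_pos_iff.2 hTne
    omega
  set j : ℕ → ℕ := fun i => T.getD (i+1) 0 - T.getD i 0 with hj
  have hgetD0 : T.getD 0 0 = 0 := by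
    rw [getD_zero_eq_headI hTne, hhead]
  have hmono : ∀ k, k + 1 < T.length → T.getD k 0 < T.getD (k+1) 0 :=
    sorted_getD_lt hsorted
  have hj1 : ∀ i < m, 1 ≤ j i := by
    intro i hi
    have := hmono i (by omega)
    simp only [hj]
    omega
  have hps : ∀ i ≤ m, ∑ i' ∈ Finset.range i, j i' = T.getD i 0 := by
    intro i hi
    induction i with
    | zero =>
      rw [Finset.range_zero, Finset.sum_empty]
      exact hgetD0.symm
    | succ i' ih =>
      rw [Finset.sum_range_succ, ih (by omega)]
      have := hmono i' (by omega)
      simp only [hj]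
      omega
  have htot : ∑ i ∈ Finset.range m, j i = n := by
    rw [hps m le_rfl]
    rw [show m = T.length - 1 from rfl, getD_length_sub_one hTne, hlast]
  -- the hRen event is the cylinder
  have hset : {ω : ℕ → Bool | ∀ t ≤ ∑ i ∈ Finset.range m, j i,
      (ω t = true ↔ ∃ i ≤ m, t = ∑ i' ∈ Finset.range i, j i')} = Cyl (n+1) s := by
    ext ω
    simp only [Set.mem_setOf_eq, Cyl, htot]
    constructor
    · intro h i hi
      have h2 := h i (by omega)
      have h3 : (∃ i' ≤ m, i = ∑ i'' ∈ Finset.range i', j i'') ↔ s i = true := by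
        constructor
        · rintro ⟨i', hi', rfl⟩
          rw [hps i' hi']
          exact ((hmemT _).1 (getD_mem_of_lt (by omega))).2
        · intro hsi
          have : i ∈ T := (hmemT i).2 ⟨hi, hsi⟩
          rcases List.mem_iff_get.1 this with ⟨k, hk⟩
          refine ⟨k, by omega, ?_⟩
          rw [hps k (by omega)]
          rw [List.getD_eq_getElem _ _ (by omega)]
          rw [← hk]
          rfl
      rw [h3] at h2
      cases hω : ω i <;> cases hsi : s i
      · rfl
      · exact absurd (h2.2 hsi) (by rw [hω]; simp)
      · exact absurd (h2.1 hω) (by rw [hsi]; simp)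
      · rfl
    · intro h t ht
      rw [h t (by omega)]
      constructor
      · intro hst
        have : t ∈ T := (hmemT t).2 ⟨by omega, hst⟩
        rcases List.mem_iff_get.1 this with ⟨k, hk⟩
        refine ⟨k, by omega, ?_⟩
        rw [hps k (by omega)]
        rw [List.getD_eq_getElem _ _ (by omega)]
        rw [← hk]
        rfl
      · rintro ⟨i', hi', rfl⟩
        rw [hps i' hi']
        exact ((hmemT _).1 (getD_mem_of_lt (by omega))).2
  have hprod : ∏ i ∈ Finset.range m, p (j i) = gp p T := by
    rw [gp, list_prod_map_eq, gaps_length, hlen]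
    simp only [Nat.add_sub_cancel]
    apply Finset.prod_congr rfl
    intro i hi
    simp only [Finset.mem_range] at hi
    rw [gaps_getD T i (by omega)]
  have := hRen m j hj1
  rw [hset, hprod] at this
  rw [this]
  congr 1

include hp0 hp00 hpsum hp1 hmean in
lemma Pf_anchored (n : ℕ) (s : ℕ → Bool) (hs0 : s 0 = true) (hsn : s n = true) :
    Pf p (n+1) s = lam p * gp p (trues (n+1) s) := by
  have h0T : (0 : ℕ) ∈ trues (n+1) s := mem_trues.2 ⟨Nat.succ_pos n, hs0⟩
  have hTne : trues (n+1) s ≠ [] := List.ne_nil_of_mem h0T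
  have hsorted := trues_sorted (n+1) s
  have hhead : (trues (n+1) s).headI = 0 := Nat.le_zero.1 (headI_le hsorted h0T)
  have hlast : (trues (n+1) s).getLastD 0 = n := by
    rw [trues_succ, hsn]
    simp only [if_true]
    exact getLastD_append_singleton _ n 0
  rw [Pf, if_neg hTne, hhead, hlast, rr_zero hp0 hp00 hpsum hp1 hmean]
  have : (n+1) - 1 - n = 0 := by omega
  rw [this, rr_zero hp0 hp00 hpsum hp1 hmean]
  ring

include hp0 hp00 hpsum hp1 hmean hstat hRen in
theorem MT : ∀ (n : ℕ) (s : ℕ → Bool), μ (Cyl n s) = ENNReal.ofReal (Pf p n s) := by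
  intro n
  induction n with
  | zero =>
    intro s
    have h1 : Cyl 0 s = Set.univ := by
      ext ω; simp [Cyl]
    rw [h1, Pf_zero_eq_one hp0 hp00 hpsum hp1 hmean, measure_univ, ENNReal.ofReal_one]
  | succ n IH =>
    -- first, the case where the last coordinate is true
    have hET : ∀ s : ℕ → Bool, s n = true → μ (Cyl (n+1) s) = ENNReal.ofReal (Pf p (n+1) s) := by
      intro s hsn
      by_cases hs0 : s 0 = true
      · rw [ANCH hp0 hp00 hpsum hp1 hmean hRen n s hs0 hsn,
          Pf_anchored hp0 hp00 hpsum hp1 hmean n s hs0 hsn]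
      · have hs0f : s 0 = false := by
          cases h : s 0
          · rfl
          · exact absurd h hs0
        have hn : n ≠ 0 := by
          intro h
          rw [h] at hsn
          exact hs0 hsn
        set s' : ℕ → Bool := fun i => s (i+1) with hs'
        have hfun : cns false s' = s := by
          funext i
          cases i with
          | zero => exact hs0f.symm
          | succ k => rfl
        have hpre : shiftF ⁻¹' (Cyl n s') = Cyl (n+1) (cns false s') ∪ Cyl (n+1) (cns true s') := by
          ext ω
          simp only [Set.mem_preimage, Set.mem_union, Cyl, Set.mem_setOf_eq, shiftF]
          constructor
          · intro h
            cases hω : ω 0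
            · left
              intro i hi
              cases i with
              | zero => exact hω
              | succ k => exact h k (by omega)
            · right
              intro i hi
              cases i with
              | zero => exact hω
              | succ k => exact h k (by omega)
          · intro h i hi
            rcases h with h | h
            · exact h (i+1) (by omega)
            · exact h (i+1) (by omega)
        have hdisj : Disjoint (Cyl (n+1) (cns false s')) (Cyl (n+1) (cns true s')) := by
          rw [Set.disjoint_left]
          intro ω h1 h2
          have e1 := h1 0 (by omega)
          have e2 := h2 0 (by omega)
          rw [e1] at e2
          exact Bool.false_ne_true e2
        have hmeas : μ (Cyl n s') = μ (Cyl (n+1) (cns false s')) + μ (Cyl (n+1) (cns true s')) := by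
          rw [← mu_shift_preimage hstat (measurableSet_Cyl n s'), show shiftF = (fun (ω : ℕ → Bool) n => ω (n+1)) from rfl]
          rw [show ((fun (ω : ℕ → Bool) n => ω (n+1)) ⁻¹' (Cyl n s')) = shiftF ⁻¹' (Cyl n s') from rfl, hpre]
          exact measure_union hdisj (measurableSet_Cyl (n+1) (cns true s'))
        have htrue : (cns true s') n = true := by
          cases hc : n with
          | zero => exact absurd hc hn
          | succ k =>
            show s' k = true
            show s (k+1) = true
            rw [← hc]
            exact hsn
        have hB : μ (Cyl (n+1) (cns true s')) = ENNReal.ofReal (Pf p (n+1) (cns true s')) := by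
          rw [ANCH hp0 hp00 hpsum hp1 hmean hRen n (cns true s') rfl htrue,
            Pf_anchored hp0 hp00 hpsum hp1 hmean n (cns true s') rfl htrue]
        rw [IH s'] at hmeas
        have hsplit := Pf_split_front hp0 hp00 hpsum hp1 hmean n s'
        have hkey : μ (Cyl (n+1) (cns false s')) + ENNReal.ofReal (Pf p (n+1) (cns true s'))
            = ENNReal.ofReal (Pf p (n+1) (cns false s')) + ENNReal.ofReal (Pf p (n+1) (cns true s')) := by
          rw [← ENNReal.ofReal_add (Pf_nonneg hp0 hp00 hpsum hp1 hmean _ _)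
            (Pf_nonneg hp0 hp00 hpsum hp1 hmean _ _), ← hsplit, hmeas, hB]
        have hcancel := WithTop.add_right_cancel ENNReal.ofReal_ne_top hkey
        rw [hfun] at hcancel
        exact hcancel
    intro s
    by_cases hsn : s n = true
    · exact hET s hsn
    · have hsnf : s n = false := by
        cases h : s n
        · rfl
        · exact absurd h hsn
      set s₁ : ℕ → Bool := Function.update s n true with hs₁def
      have hs₁n : s₁ n = true := Function.update_self n true s
      have hag : ∀ i < n, s i = s₁ i := by
        intro i hi
        rw [hs₁def, Function.update_of_ne (by omega)]
      have hsplitset : Cyl n s = Cyl (n+1) s ∪ Cyl (n+1) s₁ := by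
        ext ω
        simp only [Cyl, Set.mem_setOf_eq, Set.mem_union]
        constructor
        · intro h
          cases hω : ω n
          · left
            intro i hi
            rcases Nat.lt_succ_iff_lt_or_eq.1 hi with hi' | rfl
            · exact h i hi'
            · rw [hω, hsnf]
          · right
            intro i hi
            rcases Nat.lt_succ_iff_lt_or_eq.1 hi with hi' | rfl
            · rw [h i hi', hag i hi']
            · rw [hω, hs₁n]
        · intro h i hi
          rcases h with h | h
          · exact h i (by omega)
          · rw [h i (by omega), ← hag i hi]
      have hdisj : Disjoint (Cyl (n+1) s) (Cyl (n+1) s₁) := by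
        rw [Set.disjoint_left]
        intro ω h1 h2
        have e1 := h1 n (by omega)
        have e2 := h2 n (by omega)
        rw [e1, hsnf] at e2
        rw [hs₁n] at e2
        simp at e2
      have hmeas : μ (Cyl n s) = μ (Cyl (n+1) s) + μ (Cyl (n+1) s₁) := by
        rw [hsplitset]
        exact measure_union hdisj (measurableSet_Cyl (n+1) s₁)
      rw [IH s, hET s₁ hs₁n] at hmeas
      have hsplit := Pf_split_back hp0 hp00 hpsum hp1 hmean n s s₁ hag hsnf hs₁n
      have hkey : μ (Cyl (n+1) s) + ENNReal.ofReal (Pf p (n+1) s₁)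
          = ENNReal.ofReal (Pf p (n+1) s) + ENNReal.ofReal (Pf p (n+1) s₁) := by
        rw [← ENNReal.ofReal_add (Pf_nonneg hp0 hp00 hpsum hp1 hmean _ _)
          (Pf_nonneg hp0 hp00 hpsum hp1 hmean _ _), ← hsplit, ← hmeas]
      exact WithTop.add_right_cancel ENNReal.ofReal_ne_top hkey

lemma shiftF_iterate (t : ℕ) : ∀ (ω : ℕ → Bool), (shiftF^[t]) ω = fun i => ω (i + t) := by
  induction t with
  | zero => intro ω; funext i; rfl
  | succ k ih =>
    intro ω
    rw [Function.iterate_succ_apply, ih (shiftF ω)]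
    funext i
    rfl

lemma measurable_shiftF_iterate (t : ℕ) : Measurable (shiftF^[t]) :=
  Measurable.iterate measurable_shiftF t

include hstat in
lemma mu_shift_iterate_preimage (t : ℕ) {A : Set (ℕ → Bool)} (hA : MeasurableSet A) :
    μ ((shiftF^[t]) ⁻¹' A) = μ A := by
  induction t with
  | zero => rfl
  | succ k ih =>
    rw [Function.iterate_succ, Set.preimage_comp]
    rw [mu_shift_preimage hstat (measurable_shiftF_iterate k hA)]
    exact ih

/-- the extension of a finite pattern by `false` -/
def exts (n : ℕ) (s : Fin n → Bool) : ℕ → Bool :=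
  fun i => if h : i < n then s ⟨i, h⟩ else false

lemma exts_lt {n : ℕ} (s : Fin n → Bool) {i : ℕ} (h : i < n) : exts n s i = s ⟨i, h⟩ :=
  dif_pos h

include hp0 hp00 hpsum hp1 hmean hstat hRen in
/-- Master grouping lemma: the sum of `Pf` over all strings satisfying a
"pattern" constraint equals the measure of the corresponding event. -/
lemma sum_Pf_eq_measure (n : ℕ) (A : Set (ℕ → Bool)) (hA : MeasurableSet A)
    (P : (Fin n → Bool) → Prop) [DecidablePred P]
    (h1 : ∀ s, P s → Cyl n (exts n s) ⊆ A)
    (h2 : ∀ s ω, ω ∈ A → ω ∈ Cyl n (exts n s) → P s) :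
    ∑ s ∈ Finset.univ.filter (fun s => P s), Pf p n (exts n s) = (μ A).toReal := by
  have hU : A = ⋃ s ∈ Finset.univ.filter (fun s : Fin n → Bool => P s), Cyl n (exts n s) := by
    ext ω
    simp only [Set.mem_iUnion, Finset.mem_filter, Finset.mem_univ, true_and]
    constructor
    · intro hω
      refine ⟨fun i => ω i, ?_, ?_⟩
      · apply h2 _ ω hω
        intro i hi
        rw [exts_lt _ hi]
      · intro i hi
        rw [exts_lt _ hi]
    · rintro ⟨s, hPs, hωs⟩
      exact h1 s hPs hωs
  have hdisj : (↑(Finset.univ.filter (fun s : Fin n → Bool => P s)) : Set (Fin n → Bool)).PairwiseDisjoint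
      (fun s => Cyl n (exts n s)) := by
    intro s _ s' _ hne
    apply Set.disjoint_left.2
    intro ω hω hω'
    apply hne
    funext i
    have e1 := hω i.1 i.2
    have e2 := hω' i.1 i.2
    rw [exts_lt _ i.2] at e1
    rw [exts_lt _ i.2] at e2
    rw [← e1, ← e2]
  have hmu : μ A = ∑ s ∈ Finset.univ.filter (fun s : Fin n → Bool => P s), μ (Cyl n (exts n s)) := by
    rw [hU]
    exact measure_biUnion_finset hdisj (fun s _ => measurableSet_Cyl n (exts n s))
  have hsum : ∑ s ∈ Finset.univ.filter (fun s : Fin n → Bool => P s), μ (Cyl n (exts n s))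
      = ENNReal.ofReal (∑ s ∈ Finset.univ.filter (fun s : Fin n → Bool => P s), Pf p n (exts n s)) := by
    rw [ENNReal.ofReal_sum_of_nonneg (fun s _ => Pf_nonneg hp0 hp00 hpsum hp1 hmean n (exts n s))]
    exact Finset.sum_congr rfl fun s _ => MT hp0 hp00 hpsum hp1 hmean hstat hRen n (exts n s)
  rw [hmu, hsum, ENNReal.toReal_ofReal
    (Finset.sum_nonneg fun s _ => Pf_nonneg hp0 hp00 hpsum hp1 hmean n (exts n s))]

end measure

/-! ### special patterns -/

def pat0 (a : ℕ) : ℕ → Bool := fun i => decide (i = a)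
def pat1 : ℕ → Bool := fun i => decide (i = 0)
def patg (j : ℕ) : ℕ → Bool := fun i => decide (i = 0 ∨ i = j)

lemma trues_pat0 (a : ℕ) : trues (a+1) (pat0 a) = [a] := by
  rw [trues_succ]
  have h1 : trues a (pat0 a) = [] := by
    rw [trues, List.filter_eq_nil_iff]
    intro x hx
    simp only [List.mem_range] at hx
    simp [pat0]
    omega
  rw [h1]
  simp [pat0]

lemma trues_pat1 : ∀ k, 0 < k → trues k pat1 = [0] := by
  intro k
  induction k with
  | zero => intro h; omega
  | succ k' ih =>
    intro _
    rcases Nat.eq_zero_or_pos k' with rfl | hk'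
    · rw [trues_succ]
      have : trues 0 pat1 = [] := rfl
      rw [this]
      simp [pat1]
    · rw [trues_succ, ih hk']
      have : pat1 k' = false := by simp [pat1]; omega
      rw [this]
      simp

lemma trues_patg_aux (j : ℕ) : ∀ k, 0 < k → k ≤ j → trues k (patg j) = [0] := by
  intro k
  induction k with
  | zero => intro h; omega
  | succ k' ih =>
    intro _ hkj
    rcases Nat.eq_zero_or_pos k' with rfl | hk'
    · rw [trues_succ]
      have : trues 0 (patg j) = [] := rfl
      rw [this]
      simp [patg]
    · rw [trues_succ, ih hk' (by omega)]
      have : patg j k' = false := by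
        simp [patg]
        omega
      rw [this]
      simp

lemma trues_patg (j : ℕ) (hj : 0 < j) : trues (j+1) (patg j) = [0, j] := by
  rw [trues_succ, trues_patg_aux j j hj le_rfl]
  have : patg j j = true := by simp [patg]
  rw [this]
  simp

section measure2
variable {p : ℕ → ℝ} (hp0 : ∀ j, 0 ≤ p j) (hp00 : p 0 = 0)
    (hpsum : Summable p) (hp1 : ∑' j, p j = 1)
    (hmean : Summable fun j : ℕ => (j : ℝ) * p j)
    {μ : Measure (ℕ → Bool)} [IsProbabilityMeasure μ]
    (hstat : μ.map (fun ω n => ω (n + 1)) = μ)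
    (hRen : ∀ (m : ℕ) (j : ℕ → ℕ), (∀ i < m, 1 ≤ j i) →
      μ {ω | ∀ t ≤ ∑ i ∈ Finset.range m, j i,
          (ω t = true ↔ ∃ i ≤ m, t = ∑ i' ∈ Finset.range i, j i')} =
        ENNReal.ofReal ((∑' j' : ℕ, (j' : ℝ) * p j')⁻¹ * ∏ i ∈ Finset.range m, p (j i)))

include hp0 hp00 hpsum hp1 hmean

lemma Pf_pat0 (a : ℕ) : Pf p (a+1) (pat0 a) = lam p * rr p a := by
  rw [Pf, if_neg (by rw [trues_pat0]; simp), trues_pat0]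
  have h1 : ([a] : List ℕ).headI = a := rfl
  have h2 : ([a] : List ℕ).getLastD 0 = a := rfl
  have h3 : gp p [a] = 1 := by simp [gp, gaps_single]
  rw [h1, h2, h3]
  have h4 : (a+1) - 1 - a = 0 := by omega
  rw [h4, rr_zero hp0 hp00 hpsum hp1 hmean]
  ring

lemma Pf_pat1 (k : ℕ) (hk : 0 < k) : Pf p k pat1 = lam p * rr p (k - 1) := by
  rw [Pf, if_neg (by rw [trues_pat1 k hk]; simp), trues_pat1 k hk]
  have h1 : ([0] : List ℕ).headI = 0 := rfl
  have h2 : ([0] : List ℕ).getLastD 0 = 0 := rfl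
  have h3 : gp p [0] = 1 := by simp [gp, gaps_single]
  rw [h1, h2, h3, rr_zero hp0 hp00 hpsum hp1 hmean]
  have h4 : k - 1 - 0 = k - 1 := by omega
  rw [h4]
  ring

lemma Pf_patg (j : ℕ) (hj : 0 < j) : Pf p (j+1) (patg j) = lam p * p j := by
  rw [Pf, if_neg (by rw [trues_patg j hj]; simp), trues_patg j hj]
  have h1 : ([0, j] : List ℕ).headI = 0 := rfl
  have h2 : ([0, j] : List ℕ).getLastD 0 = j := rfl
  have h3 : gp p [0, j] = p j := by
    rw [gp]
    rw [show gaps [0, j] = [j - 0] from rfl]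
    simp
  rw [h1, h2, h3, rr_zero hp0 hp00 hpsum hp1 hmean]
  have h4 : (j+1) - 1 - j = 0 := by omega
  rw [h4, rr_zero hp0 hp00 hpsum hp1 hmean]
  ring

include hstat hRen

lemma sum_Pf_total (n : ℕ) : ∑ s : Fin n → Bool, Pf p n (exts n s) = 1 := by
  have h := sum_Pf_eq_measure hp0 hp00 hpsum hp1 hmean hstat hRen n Set.univ
    MeasurableSet.univ (fun _ => True) (fun s _ => Set.subset_univ _)
    (fun s ω _ _ => trivial)
  rw [Finset.filter_true] at h
  rw [h, measure_univ, ENNReal.toReal_one]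

lemma sum_Pf_first (n a : ℕ) (ha : a < n) :
    ∑ s ∈ Finset.univ.filter
      (fun s : Fin n → Bool => exts n s a = true ∧ ∀ i < a, exts n s i = false),
      Pf p n (exts n s) = lam p * rr p a := by
  have hsub : a + 1 ≤ n := ha
  have h := sum_Pf_eq_measure hp0 hp00 hpsum hp1 hmean hstat hRen n
    (Cyl (a+1) (pat0 a)) (measurableSet_Cyl _ _)
    (fun s : Fin n → Bool => exts n s a = true ∧ ∀ i < a, exts n s i = false)
    ?_ ?_
  · rw [h, MT hp0 hp00 hpsum hp1 hmean hstat hRen,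
      Pf_pat0 hp0 hp00 hpsum hp1 hmean a, ENNReal.toReal_ofReal]
    · rw [← Pf_pat0 hp0 hp00 hpsum hp1 hmean a]
      exact Pf_nonneg hp0 hp00 hpsum hp1 hmean _ _
  · rintro s ⟨hPa, hPi⟩ ω hω
    intro i hi
    have hin : i < n := by omega
    rw [hω i hin]
    rcases Nat.lt_succ_iff_lt_or_eq.1 hi with hi' | rfl
    · rw [hPi i hi']
      simp [pat0]
      omega
    · rw [hPa]
      simp [pat0]
  · intro s ω hωA hωC
    constructor
    · rw [← hωC a ha, hωA a (by omega)]
      simp [pat0]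
    · intro i hi
      rw [← hωC i (by omega), hωA i (by omega)]
      simp [pat0]
      omega

lemma sum_Pf_last (n d : ℕ) (hd : d < n) :
    ∑ s ∈ Finset.univ.filter
      (fun s : Fin n → Bool => exts n s d = true ∧ ∀ i < n, d < i → exts n s i = false),
      Pf p n (exts n s) = lam p * rr p (n - 1 - d) := by
  have hmemA : ∀ ω : ℕ → Bool, ω ∈ (shiftF^[d]) ⁻¹' (Cyl (n - d) pat1)
      ↔ ∀ i < n - d, ω (i + d) = pat1 i := by
    intro ω
    rw [Set.mem_preimage, shiftF_iterate d ω]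
    rfl
  have h := sum_Pf_eq_measure hp0 hp00 hpsum hp1 hmean hstat hRen n
    ((shiftF^[d]) ⁻¹' (Cyl (n - d) pat1))
    ((measurable_shiftF_iterate d) (measurableSet_Cyl _ _))
    (fun s : Fin n → Bool => exts n s d = true ∧ ∀ i < n, d < i → exts n s i = false)
    ?_ ?_
  · rw [h, mu_shift_iterate_preimage hstat d (measurableSet_Cyl _ _),
      MT hp0 hp00 hpsum hp1 hmean hstat hRen,
      Pf_pat1 hp0 hp00 hpsum hp1 hmean (n - d) (by omega), ENNReal.toReal_ofReal]
    · congr 2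
      omega
    · rw [← Pf_pat1 hp0 hp00 hpsum hp1 hmean (n - d) (by omega)]
      exact Pf_nonneg hp0 hp00 hpsum hp1 hmean _ _
  · rintro s ⟨hPd, hPi⟩ ω hω
    rw [hmemA]
    intro i hi
    have hin : i + d < n := by omega
    rw [hω (i + d) hin]
    rcases Nat.eq_zero_or_pos i with rfl | hipos
    · rw [show (0:ℕ) + d = d from by omega, hPd]
      simp [pat1]
    · rw [hPi (i + d) hin (by omega)]
      simp [pat1]
      omega
  · intro s ω hωA hωC
    rw [hmemA] at hωA
    constructor
    · have := hωA 0 (by omega)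
      rw [show (0:ℕ) + d = d from by omega] at this
      rw [← hωC d hd, this]
      simp [pat1]
    · intro i hin hdi
      have := hωA (i - d) (by omega)
      rw [show i - d + d = i from by omega] at this
      rw [← hωC i hin, this]
      simp [pat1]
      omega

lemma sum_Pf_gap (n t j : ℕ) (hj : 0 < j) (htj : t + j < n) :
    ∑ s ∈ Finset.univ.filter
      (fun s : Fin n → Bool => exts n s t = true ∧ exts n s (t+j) = true ∧
        ∀ u < t + j, t < u → exts n s u = false),
      Pf p n (exts n s) = lam p * p j := by
  have hmemA : ∀ ω : ℕ → Bool, ω ∈ (shiftF^[t]) ⁻¹' (Cyl (j + 1) (patg j))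
      ↔ ∀ i < j + 1, ω (i + t) = patg j i := by
    intro ω
    rw [Set.mem_preimage, shiftF_iterate t ω]
    rfl
  have h := sum_Pf_eq_measure hp0 hp00 hpsum hp1 hmean hstat hRen n
    ((shiftF^[t]) ⁻¹' (Cyl (j + 1) (patg j)))
    ((measurable_shiftF_iterate t) (measurableSet_Cyl _ _))
    (fun s : Fin n → Bool => exts n s t = true ∧ exts n s (t+j) = true ∧
        ∀ u < t + j, t < u → exts n s u = false)
    ?_ ?_
  · rw [h, mu_shift_iterate_preimage hstat t (measurableSet_Cyl _ _),
      MT hp0 hp00 hpsum hp1 hmean hstat hRen,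
      Pf_patg hp0 hp00 hpsum hp1 hmean j hj, ENNReal.toReal_ofReal]
    · rw [← Pf_patg hp0 hp00 hpsum hp1 hmean j hj]
      exact Pf_nonneg hp0 hp00 hpsum hp1 hmean _ _
  · rintro s ⟨hPt, hPtj, hPu⟩ ω hω
    rw [hmemA]
    intro i hi
    have hin : i + t < n := by omega
    rw [hω (i + t) hin]
    rcases Nat.eq_zero_or_pos i with rfl | hipos
    · rw [show (0:ℕ) + t = t from by omega, hPt]
      simp [patg]
    · rcases eq_or_ne i j with rfl | hij
      · rw [show i + t = t + i from by omega, hPtj]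
        simp [patg]
      · rw [hPu (i + t) (by omega) (by omega)]
        simp [patg]
        omega
  · intro s ω hωA hωC
    rw [hmemA] at hωA
    refine ⟨?_, ?_, ?_⟩
    · have := hωA 0 (by omega)
      rw [show (0:ℕ) + t = t from by omega] at this
      rw [← hωC t (by omega), this]
      simp [patg]
    · have := hωA j (by omega)
      rw [show j + t = t + j from by omega] at this
      rw [← hωC (t+j) htj, this]
      simp [patg]
    · intro u hutj htu
      have := hωA (u - t) (by omega)
      rw [show u - t + t = u from by omega] at this
      rw [← hωC u (by omega), this]
      simp [patg]
      omega

end measure2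

/-! ### gap characterization -/

def HG (n : ℕ) (s : ℕ → Bool) (t j : ℕ) : Prop :=
  0 < j ∧ t + j < n ∧ s t = true ∧ s (t + j) = true ∧ ∀ u < t + j, t < u → s u = false

instance (n : ℕ) (s : ℕ → Bool) (t j : ℕ) : Decidable (HG n s t j) := by
  unfold HG; exact inferInstance

lemma first_true_iff {n a : ℕ} {s : ℕ → Bool} :
    (trues n s ≠ [] ∧ (trues n s).headI = a) ↔
      (a < n ∧ s a = true ∧ ∀ i < a, s i = false) := by
  constructor
  · rintro ⟨hne, rfl⟩
    have hmem := headI_mem hne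
    have h1 := mem_trues.1 hmem
    refine ⟨h1.1, h1.2, ?_⟩
    intro i hi
    cases hsi : s i
    · rfl
    · have : i ∈ trues n s := mem_trues.2 ⟨by omega, hsi⟩
      have := headI_le (trues_sorted n s) this
      omega
  · rintro ⟨han, hsa, hlt⟩
    have hmem : a ∈ trues n s := mem_trues.2 ⟨han, hsa⟩
    have hne : trues n s ≠ [] := List.ne_nil_of_mem hmem
    refine ⟨hne, ?_⟩
    have h1 := headI_le (trues_sorted n s) hmem
    have h2 := mem_trues.1 (headI_mem hne)
    rcases Nat.lt_or_ge (trues n s).headI a with hlt' | hge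
    · rw [hlt _ hlt'] at h2
      exact absurd h2.2 (by simp)
    · omega

lemma last_true_iff {n d : ℕ} {s : ℕ → Bool} :
    (trues n s ≠ [] ∧ (trues n s).getLastD 0 = d) ↔
      (d < n ∧ s d = true ∧ ∀ i < n, d < i → s i = false) := by
  constructor
  · rintro ⟨hne, rfl⟩
    have hmem := getLastD_mem hne 0
    have h1 := mem_trues.1 hmem
    refine ⟨h1.1, h1.2, ?_⟩
    intro i hi hgt
    cases hsi : s i
    · rfl
    · have : i ∈ trues n s := mem_trues.2 ⟨hi, hsi⟩
      have := le_getLastD (trues_sorted n s) this 0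
      omega
  · rintro ⟨hdn, hsd, hgt⟩
    have hmem : d ∈ trues n s := mem_trues.2 ⟨hdn, hsd⟩
    have hne : trues n s ≠ [] := List.ne_nil_of_mem hmem
    refine ⟨hne, ?_⟩
    have h1 := le_getLastD (trues_sorted n s) hmem 0
    have h2 := mem_trues.1 (getLastD_mem hne 0)
    rcases Nat.lt_or_ge d ((trues n s).getLastD 0) with hlt' | hge
    · rw [hgt _ h2.1 hlt'] at h2
      exact absurd h2.2 (by simp)
    · omega

/-- The sum over the gaps list equals a double sum over "gap pairs". -/
lemma CL (f : ℕ → ℝ) : ∀ (n : ℕ) (s : ℕ → Bool),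
    ((gaps (trues n s)).map f).sum
      = ∑ q ∈ Finset.range n ×ˢ Finset.range n, if HG n s q.1 q.2 then f q.2 else 0 := by
  intro n
  induction n with
  | zero => intro s; simp [trues, gaps]
  | succ n IH =>
    intro s
    have hBsub : Finset.range n ×ˢ Finset.range n ⊆
        Finset.range (n+1) ×ˢ Finset.range (n+1) :=
      Finset.product_subset_product (Finset.range_subset_range.2 (by omega))
        (Finset.range_subset_range.2 (by omega))
    cases hsn : s n with
    | false =>
      have ht : trues (n+1) s = trues n s := by
        rw [trues_succ, hsn]; simp
      rw [ht, IH s]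
      rw [Finset.sum_subset hBsub]
      · apply Finset.sum_congr rfl
        intro q hq
        simp only [Finset.mem_product, Finset.mem_range] at hq
        congr 1
        apply propext
        constructor
        · rintro ⟨h1, h2, h3, h4, h5⟩
          exact ⟨h1, by omega, h3, h4, h5⟩
        · rintro ⟨h1, h2, h3, h4, h5⟩
          have : q.1 + q.2 ≠ n := by
            intro h
            rw [h, hsn] at h4
            exact Bool.false_ne_true h4
          exact ⟨h1, by omega, h3, h4, h5⟩
      · intro q hq hqn
        simp only [Finset.mem_product, Finset.mem_range] at hq hqn
        rw [if_neg]
        rintro ⟨h1, h2, h3, h4, h5⟩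
        have : q.1 + q.2 ≠ n := by
          intro h
          rw [h, hsn] at h4
          exact Bool.false_ne_true h4
        push_neg at hqn
        omega
    | true =>
      have ht : trues (n+1) s = trues n s ++ [n] := by
        rw [trues_succ, hsn]; simp
      rcases eq_or_ne (trues n s) [] with hT | hTne
      · rw [ht, hT]
        simp only [List.nil_append]
        rw [show ((gaps [n]).map f).sum = 0 from by simp [gaps_single]]
        symm
        apply Finset.sum_eq_zero
        intro q hq
        rw [if_neg]
        rintro ⟨h1, h2, h3, h4, h5⟩
        have hq1 : q.1 < n := by omega
        have : q.1 ∈ trues n s := mem_trues.2 ⟨hq1, h3⟩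
        rw [hT] at this
        exact absurd this List.not_mem_nil
      · set d := (trues n s).getLastD 0 with hdd
        have hd : d < n := trues_getLastD_lt hTne
        have hsd : s d = true := (mem_trues.1 (getLastD_mem hTne 0)).2
        have hmax : ∀ u < n, d < u → s u = false := by
          intro u hu hgt
          cases hsu : s u
          · rfl
          · have : u ∈ trues n s := mem_trues.2 ⟨hu, hsu⟩
            have := le_getLastD (trues_sorted n s) this 0
            omega
        have hgnew : HG (n+1) s d (n - d) := by
          refine ⟨by omega, by omega, hsd, ?_, ?_⟩
          · rw [show d + (n - d) = n from by omega]
            exact hsn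
          · intro u hu hgt
            rw [show d + (n - d) = n from by omega] at hu
            exact hmax u hu hgt
        have hLHS : ((gaps (trues (n+1) s)).map f).sum
            = ((gaps (trues n s)).map f).sum + f (n - d) := by
          rw [ht, gaps_append_singleton hTne, List.map_append, List.sum_append]
          simp [hdd]
        rw [hLHS, IH s]
        have hpt : ∀ q ∈ Finset.range (n+1) ×ˢ Finset.range (n+1),
            (if HG (n+1) s q.1 q.2 then f q.2 else 0)
              = (if HG n s q.1 q.2 then f q.2 else 0)
                + (if q = (d, n - d) then f q.2 else 0) := by
          intro q hq
          by_cases hq' : q = (d, n - d)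
          · subst hq'
            rw [if_pos hgnew, if_pos rfl, if_neg]
            · simp
            · rintro ⟨h1, h2, h3, h4, h5⟩
              simp only at h2
              omega
          · rw [if_neg hq']
            rw [add_zero]
            congr 1
            apply propext
            constructor
            · rintro ⟨h1, h2, h3, h4, h5⟩
              have hne : q.1 + q.2 ≠ n := by
                intro he
                -- q.1 must equal d
                have hq1n : q.1 < n := by omega
                have hq1le : q.1 ≤ d := by
                  have : q.1 ∈ trues n s := mem_trues.2 ⟨hq1n, h3⟩
                  exact le_getLastD (trues_sorted n s) this 0
                rcases Nat.lt_or_ge q.1 d with hlt | hge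
                · have : s d = false := h5 d (by omega) hlt
                  rw [this] at hsd
                  exact Bool.false_ne_true hsd
                · have he1 : q.1 = d := by omega
                  apply hq'
                  have : q = (q.1, q.2) := rfl
                  rw [this, he1]
                  congr 1
                  omega
              exact ⟨h1, by omega, h3, h4, h5⟩
            · rintro ⟨h1, h2, h3, h4, h5⟩
              exact ⟨h1, by omega, h3, h4, h5⟩
        rw [Finset.sum_congr rfl hpt, Finset.sum_add_distrib]
        congr 1
        · rw [Finset.sum_subset hBsub]
          intro q hq hqn
          rw [if_neg]
          rintro ⟨h1, h2, h3, h4, h5⟩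
          simp only [Finset.mem_product, Finset.mem_range] at hq hqn
          push_neg at hqn
          omega
        · rw [Finset.sum_ite_eq' (Finset.range (n+1) ×ˢ Finset.range (n+1))
            ((d, n - d) : ℕ × ℕ) (fun q => f q.2)]
          rw [if_pos]
          simp only [Finset.mem_product, Finset.mem_range]
          omega

/-- logb of a list product -/
lemma logb_list_prod : ∀ (l : List ℝ), (∀ x ∈ l, x ≠ 0) →
    Real.logb 2 l.prod = (l.map (Real.logb 2)).sum := by
  intro l
  induction l with
  | nil => intro _; simp
  | cons a t ih =>
    intro h
    rw [List.prod_cons, List.map_cons, List.sum_cons,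
      Real.logb_mul (h a (List.mem_cons_self)) ?_, ih (fun x hx => h x (List.mem_cons_of_mem a hx))]
    exact List.prod_ne_zero fun hx => h 0 (List.mem_cons_of_mem a hx) rfl

section pw
variable {p : ℕ → ℝ} (hp0 : ∀ j, 0 ≤ p j) (hp00 : p 0 = 0)
    (hpsum : Summable p) (hp1 : ∑' j, p j = 1)
    (hmean : Summable fun j : ℕ => (j : ℝ) * p j)

include hp0 hp00 hpsum hp1 hmean

lemma PW (n : ℕ) (s : ℕ → Bool) (hne : trues n s ≠ []) :
    phi (Pf p n s) = Pf p n s * Real.logb 2 (Ee p)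
      + Pf p n s * (-Real.logb 2 (rr p (trues n s).headI))
      + (∑ q ∈ Finset.range n ×ˢ Finset.range n,
          if HG n s q.1 q.2 then Pf p n s * (-Real.logb 2 (p q.2)) else 0)
      + Pf p n s * (-Real.logb 2 (rr p (n - 1 - (trues n s).getLastD 0))) := by
  rcases lt_or_eq_of_le (Pf_nonneg hp0 hp00 hpsum hp1 hmean n s) with hpos | hzero
  swap
  · rw [← hzero, phi_zero]
    simp
  · set a := (trues n s).headI with ha
    set b := n - 1 - (trues n s).getLastD 0 with hb
    have hfac : Pf p n s = lam p * rr p a * gp p (trues n s) * rr p b := by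
      rw [Pf, if_neg hne]
    have hlam : 0 < lam p := lam_pos hp0 hp00 hpsum hp1 hmean
    have hA : 0 < rr p a := by
      rcases lt_or_eq_of_le (rr_nonneg hp0 hp00 hpsum hp1 hmean a) with h | h
      · exact h
      · exfalso
        have : Pf p n s = 0 := by rw [hfac, ← h]; ring
        linarith
    have hG : 0 < gp p (trues n s) := by
      rcases lt_or_eq_of_le (gp_nonneg hp0 hp00 hpsum hp1 hmean (trues n s)) with h | h
      · exact h
      · exfalso
        have : Pf p n s = 0 := by rw [hfac, ← h]; ring
        linarith
    have hB : 0 < rr p b := by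
      rcases lt_or_eq_of_le (rr_nonneg hp0 hp00 hpsum hp1 hmean b) with h | h
      · exact h
      · exfalso
        have : Pf p n s = 0 := by rw [hfac, ← h]; ring
        linarith
    have hgpos : ∀ x ∈ (gaps (trues n s)).map p, 0 < x := by
      apply list_prod_pos_of_pos
      · intro x hx
        rcases List.mem_map.1 hx with ⟨g, _, rfl⟩
        exact hp0 g
      · exact hG
    have hlogG : Real.logb 2 (gp p (trues n s))
        = ((gaps (trues n s)).map (fun g => Real.logb 2 (p g))).sum := by
      rw [gp, logb_list_prod _ (fun x hx => ne_of_gt (hgpos x hx)), List.map_map]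
      rfl
    have hlogPf : Real.logb 2 (Pf p n s)
        = Real.logb 2 (lam p) + Real.logb 2 (rr p a)
          + Real.logb 2 (gp p (trues n s)) + Real.logb 2 (rr p b) := by
      rw [hfac, Real.logb_mul (by positivity) (ne_of_gt hB),
        Real.logb_mul (by positivity) (ne_of_gt hG),
        Real.logb_mul (ne_of_gt hlam) (ne_of_gt hA)]
    have hloglam : Real.logb 2 (lam p) = -Real.logb 2 (Ee p) := by
      rw [lam, Real.logb_inv]
    have hCL := CL (fun g => Real.logb 2 (p g)) n s
    have hmid : (∑ q ∈ Finset.range n ×ˢ Finset.range n,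
        if HG n s q.1 q.2 then Pf p n s * (-Real.logb 2 (p q.2)) else 0)
          = -(Pf p n s * ((gaps (trues n s)).map (fun g => Real.logb 2 (p g))).sum) := by
      rw [hCL, Finset.mul_sum, ← Finset.sum_neg_distrib]
      apply Finset.sum_congr rfl
      intro q _
      by_cases hq : HG n s q.1 q.2
      · rw [if_pos hq, if_pos hq]; ring
      · rw [if_neg hq, if_neg hq]; ring
    rw [hmid]
    simp only [phi]
    rw [hlogPf, hloglam, hlogG]
    ring

end pw

section cid
variable {p : ℕ → ℝ} (hp0 : ∀ j, 0 ≤ p j) (hp00 : p 0 = 0)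
    (hpsum : Summable p) (hp1 : ∑' j, p j = 1)
    (hmean : Summable fun j : ℕ => (j : ℝ) * p j)
    {μ : Measure (ℕ → Bool)} [IsProbabilityMeasure μ]
    (hstat : μ.map (fun ω n => ω (n + 1)) = μ)
    (hRen : ∀ (m : ℕ) (j : ℕ → ℕ), (∀ i < m, 1 ≤ j i) →
      μ {ω | ∀ t ≤ ∑ i ∈ Finset.range m, j i,
          (ω t = true ↔ ∃ i ≤ m, t = ∑ i' ∈ Finset.range i, j i')} =
        ENNReal.ofReal ((∑' j' : ℕ, (j' : ℝ) * p j')⁻¹ * ∏ i ∈ Finset.range m, p (j i)))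

include hp0 hp00 hpsum hp1 hmean hstat hRen

theorem CID (n : ℕ) :
    ∑ s : Fin n → Bool, phi (Pf p n (exts n s))
      = phi (1 - lam p * ∑ b ∈ Finset.range n, rr p b)
        + (lam p * ∑ b ∈ Finset.range n, rr p b) * Real.logb 2 (Ee p)
        + lam p * (∑ a ∈ Finset.range n, phi (rr p a))
        + lam p * (∑ b ∈ Finset.range n, phi (rr p b))
        + lam p * (∑ j ∈ Finset.range n, ((n:ℝ) - (j:ℝ)) * phi (p j)) := by
  classical
  set c0 : Fin n → Bool := fun _ => false with hc0
  have hextc0 : exts n c0 = fun _ => false := by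
    funext i
    unfold exts
    split <;> rfl
  have htc0 : trues n (exts n c0) = [] := by
    rw [hextc0, trues, List.filter_eq_nil_iff]
    intro x _
    simp
  have hPfc0 : Pf p n (exts n c0) = 1 - lam p * ∑ b ∈ Finset.range n, rr p b := by
    rw [Pf, if_pos htc0]
  have hne_iff : ∀ s : Fin n → Bool, s ≠ c0 ↔ trues n (exts n s) ≠ [] := by
    intro s
    constructor
    · intro hs
      rcases Function.ne_iff.1 hs with ⟨i, hi⟩
      have hit : s i = true := by
        cases h : s i
        · exact absurd h hi
        · rfl
      have : (i : ℕ) ∈ trues n (exts n s) := by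
        apply mem_trues.2
        exact ⟨i.2, by rw [exts_lt s i.2]; exact hit⟩
      exact List.ne_nil_of_mem this
    · intro hne hs
      rw [hs, htc0] at hne
      exact hne rfl
  have hne' : ∀ s ∈ Finset.univ.erase c0, trues n (exts n s) ≠ [] := by
    intro s hs
    exact (hne_iff s).1 (Finset.mem_erase.1 hs).1
  -- split off the all-false string
  rw [← Finset.add_sum_erase Finset.univ _ (Finset.mem_univ c0), hPfc0]
  -- expand the remaining sum pointwise
  rw [Finset.sum_congr rfl (fun s hs => PW hp0 hp00 hpsum hp1 hmean n (exts n s) (hne' s hs))]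
  rw [Finset.sum_add_distrib, Finset.sum_add_distrib, Finset.sum_add_distrib]
  have hTot : ∑ s ∈ Finset.univ.erase c0, Pf p n (exts n s)
      = lam p * ∑ b ∈ Finset.range n, rr p b := by
    rw [Finset.sum_erase_eq_sub (Finset.mem_univ c0),
      sum_Pf_total hp0 hp00 hpsum hp1 hmean hstat hRen n, hPfc0]
    ring
  -- Term 1
  have hT1 : ∑ s ∈ Finset.univ.erase c0, Pf p n (exts n s) * Real.logb 2 (Ee p)
      = (lam p * ∑ b ∈ Finset.range n, rr p b) * Real.logb 2 (Ee p) := by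
    rw [← Finset.sum_mul, hTot]
  -- Term 2 : first true
  have hT2 : ∑ s ∈ Finset.univ.erase c0,
      Pf p n (exts n s) * (-Real.logb 2 (rr p (trues n (exts n s)).headI))
        = lam p * (∑ a ∈ Finset.range n, phi (rr p a)) := by
    have hmaps : ∀ s ∈ Finset.univ.erase c0,
        (trues n (exts n s)).headI ∈ Finset.range n := by
      intro s hs
      exact Finset.mem_range.2 (trues_headI_lt (hne' s hs))
    rw [← Finset.sum_fiberwise_of_maps_to hmaps]
    rw [Finset.mul_sum]
    apply Finset.sum_congr rfl
    intro a ha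
    have han : a < n := Finset.mem_range.1 ha
    have hinner : ∀ s ∈ (Finset.univ.erase c0).filter
        (fun s => (trues n (exts n s)).headI = a),
        Pf p n (exts n s) * (-Real.logb 2 (rr p (trues n (exts n s)).headI))
          = Pf p n (exts n s) * (-Real.logb 2 (rr p a)) := by
      intro s hs
      rw [(Finset.mem_filter.1 hs).2]
    rw [Finset.sum_congr rfl hinner, ← Finset.sum_mul]
    have hfil : (Finset.univ.erase c0).filter
        (fun s => (trues n (exts n s)).headI = a)
          = Finset.univ.filter
            (fun s : Fin n → Bool => exts n s a = true ∧ ∀ i < a, exts n s i = false) := by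
      ext s
      simp only [Finset.mem_filter, Finset.mem_erase, Finset.mem_univ, true_and, and_true]
      constructor
      · rintro ⟨hne, hhead⟩
        have := first_true_iff.1 ⟨(hne_iff s).1 hne, hhead⟩
        exact ⟨this.2.1, this.2.2⟩
      · rintro ⟨h1, h2⟩
        have := first_true_iff.2 ⟨han, h1, h2⟩
        exact ⟨(hne_iff s).2 this.1, this.2⟩
    rw [hfil, sum_Pf_first hp0 hp00 hpsum hp1 hmean hstat hRen n a han]
    simp only [phi]
    ring
  -- Term 4 : last true
  have hT4 : ∑ s ∈ Finset.univ.erase c0,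
      Pf p n (exts n s) * (-Real.logb 2 (rr p (n - 1 - (trues n (exts n s)).getLastD 0)))
        = lam p * (∑ b ∈ Finset.range n, phi (rr p b)) := by
    have hmaps : ∀ s ∈ Finset.univ.erase c0,
        (trues n (exts n s)).getLastD 0 ∈ Finset.range n := by
      intro s hs
      exact Finset.mem_range.2 (trues_getLastD_lt (hne' s hs))
    rw [← Finset.sum_fiberwise_of_maps_to hmaps]
    have hstep : ∀ d ∈ Finset.range n,
        ∑ s ∈ (Finset.univ.erase c0).filter
          (fun s => (trues n (exts n s)).getLastD 0 = d),
          Pf p n (exts n s) * (-Real.logb 2 (rr p (n - 1 - (trues n (exts n s)).getLastD 0)))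
            = lam p * phi (rr p (n - 1 - d)) := by
      intro d hd
      have hdn : d < n := Finset.mem_range.1 hd
      have hinner : ∀ s ∈ (Finset.univ.erase c0).filter
          (fun s => (trues n (exts n s)).getLastD 0 = d),
          Pf p n (exts n s) * (-Real.logb 2 (rr p (n - 1 - (trues n (exts n s)).getLastD 0)))
            = Pf p n (exts n s) * (-Real.logb 2 (rr p (n - 1 - d))) := by
        intro s hs
        rw [(Finset.mem_filter.1 hs).2]
      rw [Finset.sum_congr rfl hinner, ← Finset.sum_mul]
      have hfil : (Finset.univ.erase c0).filter
          (fun s => (trues n (exts n s)).getLastD 0 = d)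
            = Finset.univ.filter
              (fun s : Fin n → Bool => exts n s d = true ∧ ∀ i < n, d < i → exts n s i = false) := by
        ext s
        simp only [Finset.mem_filter, Finset.mem_erase, Finset.mem_univ, true_and, and_true]
        constructor
        · rintro ⟨hne, hlast⟩
          have := last_true_iff.1 ⟨(hne_iff s).1 hne, hlast⟩
          exact ⟨this.2.1, this.2.2⟩
        · rintro ⟨h1, h2⟩
          have := last_true_iff.2 ⟨hdn, h1, h2⟩
          exact ⟨(hne_iff s).2 this.1, this.2⟩
      rw [hfil, sum_Pf_last hp0 hp00 hpsum hp1 hmean hstat hRen n d hdn]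
      simp only [phi]
      ring
    rw [Finset.sum_congr rfl hstep, ← Finset.mul_sum]
    congr 1
    exact Finset.sum_range_reflect (fun b => phi (rr p b)) n
  -- Term 3 : gaps
  have hT3 : ∑ s ∈ Finset.univ.erase c0,
      (∑ q ∈ Finset.range n ×ˢ Finset.range n,
        if HG n (exts n s) q.1 q.2 then Pf p n (exts n s) * (-Real.logb 2 (p q.2)) else 0)
        = lam p * (∑ j ∈ Finset.range n, ((n:ℝ) - (j:ℝ)) * phi (p j)) := by
    rw [Finset.sum_comm]
    have hq : ∀ q ∈ Finset.range n ×ˢ Finset.range n,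
        (∑ s ∈ Finset.univ.erase c0,
          if HG n (exts n s) q.1 q.2 then Pf p n (exts n s) * (-Real.logb 2 (p q.2)) else 0)
          = if 0 < q.2 ∧ q.1 + q.2 < n then lam p * phi (p q.2) else 0 := by
      intro q hqB
      rw [← Finset.sum_filter]
      by_cases hc : 0 < q.2 ∧ q.1 + q.2 < n
      · rw [if_pos hc]
        have hfil : (Finset.univ.erase c0).filter (fun s => HG n (exts n s) q.1 q.2)
            = Finset.univ.filter
              (fun s : Fin n → Bool => exts n s q.1 = true ∧ exts n s (q.1 + q.2) = true ∧
                ∀ u < q.1 + q.2, q.1 < u → exts n s u = false) := by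
          ext s
          simp only [Finset.mem_filter, Finset.mem_erase, Finset.mem_univ, true_and, and_true]
          constructor
          · rintro ⟨_, h1, h2, h3, h4, h5⟩
            exact ⟨h3, h4, h5⟩
          · rintro ⟨h1, h2, h3⟩
            refine ⟨?_, hc.1, hc.2, h1, h2, h3⟩
            apply (hne_iff s).2
            apply List.ne_nil_of_mem (mem_trues.2 ⟨by omega, h1⟩)
        rw [hfil]
        have := sum_Pf_gap hp0 hp00 hpsum hp1 hmean hstat hRen n q.1 q.2 hc.1 hc.2
        calc ∑ s ∈ Finset.univ.filter
              (fun s : Fin n → Bool => exts n s q.1 = true ∧ exts n s (q.1 + q.2) = true ∧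
                ∀ u < q.1 + q.2, q.1 < u → exts n s u = false),
              Pf p n (exts n s) * (-Real.logb 2 (p q.2))
            = (∑ s ∈ Finset.univ.filter
              (fun s : Fin n → Bool => exts n s q.1 = true ∧ exts n s (q.1 + q.2) = true ∧
                ∀ u < q.1 + q.2, q.1 < u → exts n s u = false),
              Pf p n (exts n s)) * (-Real.logb 2 (p q.2)) := by
              rw [Finset.sum_mul]
          _ = (lam p * p q.2) * (-Real.logb 2 (p q.2)) := by rw [this]
          _ = lam p * phi (p q.2) := by simp only [phi]; ring
      · rw [if_neg hc]
        apply Finset.sum_eq_zero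
        intro s hs
        exfalso
        have h := (Finset.mem_filter.1 hs).2
        exact hc ⟨h.1, h.2.1⟩
    rw [Finset.sum_congr rfl hq]
    rw [Finset.sum_product]
    rw [Finset.sum_comm]
    rw [Finset.mul_sum]
    apply Finset.sum_congr rfl
    intro j hj
    have hjn : j < n := Finset.mem_range.1 hj
    rcases Nat.eq_zero_or_pos j with rfl | hjpos
    · rw [show phi (p 0) = 0 from by rw [hp00, phi_zero]]
      rw [Finset.sum_eq_zero]
      · ring
      · intro t _
        rw [if_neg]
        rintro ⟨h1, _⟩
        omega
    · have : ∀ t ∈ Finset.range n,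
          (if 0 < j ∧ t + j < n then lam p * phi (p j) else 0)
            = if t + j < n then lam p * phi (p j) else 0 := by
        intro t _
        by_cases h : t + j < n
        · rw [if_pos ⟨hjpos, h⟩, if_pos h]
        · rw [if_neg (fun hh => h hh.2), if_neg h]
      rw [Finset.sum_congr rfl this, Finset.sum_ite, Finset.sum_const_zero, add_zero,
        Finset.sum_const]
      have hfil : (Finset.range n).filter (fun t => t + j < n) = Finset.range (n - j) := by
        ext t
        simp only [Finset.mem_filter, Finset.mem_range]
        omega
      rw [hfil, Finset.card_range, nsmul_eq_mul]
      have : ((n - j : ℕ) : ℝ) = (n : ℝ) - (j : ℝ) := by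
        push_cast [Nat.cast_sub (le_of_lt hjn)]
        ring
      rw [this]
      ring
  rw [hT1, hT2, hT3, hT4]
  ring

end cid

section final
variable {p : ℕ → ℝ} (hp0 : ∀ j, 0 ≤ p j) (hp00 : p 0 = 0)
    (hpsum : Summable p) (hp1 : ∑' j, p j = 1)
    (hmean : Summable fun j : ℕ => (j : ℝ) * p j)
    {μ : Measure (ℕ → Bool)} [IsProbabilityMeasure μ]
    (hstat : μ.map (fun ω n => ω (n + 1)) = μ)
    (hRen : ∀ (m : ℕ) (j : ℕ → ℕ), (∀ i < m, 1 ≤ j i) →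
      μ {ω | ∀ t ≤ ∑ i ∈ Finset.range m, j i,
          (ω t = true ↔ ∃ i ≤ m, t = ∑ i' ∈ Finset.range i, j i')} =
        ENNReal.ofReal ((∑' j' : ℕ, (j' : ℝ) * p j')⁻¹ * ∏ i ∈ Finset.range m, p (j i)))

include hp0 hp00 hpsum hp1 hmean hstat hRen

lemma blockEntropy_eq_sum_phi (n : ℕ) :
    blockEntropyB μ n = ∑ s : Fin n → Bool, phi (Pf p n (exts n s)) := by
  rw [blockEntropyB, ← Finset.sum_neg_distrib]
  apply Finset.sum_congr rfl
  intro s _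
  have hset : {ω : ℕ → Bool | ∀ i : Fin n, ω i = s i} = Cyl n (exts n s) := by
    ext ω
    simp only [Set.mem_setOf_eq, Cyl]
    constructor
    · intro h i hi
      rw [exts_lt s hi]
      exact h ⟨i, hi⟩
    · intro h i
      rw [h i.1 i.2, exts_lt s i.2]
  rw [hset, MT hp0 hp00 hpsum hp1 hmean hstat hRen n (exts n s),
    ENNReal.toReal_ofReal (Pf_nonneg hp0 hp00 hpsum hp1 hmean n (exts n s))]
  rfl

theorem final_limit :
    Tendsto (fun n : ℕ => blockEntropyB μ n / n) atTop
      (𝓝 (lam p * ∑' j, phi (p j))) := by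
  have hEpos := Ee_pos hp0 hp00 hpsum hp1 hmean
  have hlampos := lam_pos hp0 hp00 hpsum hp1 hmean
  set Sa : ℕ → ℝ := fun n => ∑ a ∈ Finset.range n, phi (rr p a) with hSa
  set Sj : ℕ → ℝ := fun n => ∑ j ∈ Finset.range n, ((n:ℝ) - (j:ℝ)) * phi (p j) with hSj
  set Zr : ℕ → ℝ := fun n => lam p * ∑ b ∈ Finset.range n, rr p b with hZr
  have hdecomp : ∀ n : ℕ, blockEntropyB μ n / n
      = phi (1 - Zr n) / n + (Zr n * Real.logb 2 (Ee p)) / n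
        + (lam p * Sa n) / n + (lam p * Sa n) / n + (lam p * Sj n) / n := by
    intro n
    rw [blockEntropy_eq_sum_phi hp0 hp00 hpsum hp1 hmean hstat hRen n,
      CID hp0 hp00 hpsum hp1 hmean hstat hRen n]
    simp only [hSa, hSj, hZr]
    ring
  have hZr01 : ∀ n, 0 ≤ Zr n ∧ Zr n ≤ 1 := by
    intro n
    constructor
    · apply mul_nonneg (le_of_lt hlampos)
      exact Finset.sum_nonneg fun b _ => rr_nonneg hp0 hp00 hpsum hp1 hmean b
    · have := zpart_nonneg hp0 hp00 hpsum hp1 hmean n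
      simp only [hZr]
      linarith
  -- term 1 : phi(1 - Zr n)/n → 0
  have hlim1 : Tendsto (fun n : ℕ => phi (1 - Zr n) / n) atTop (𝓝 0) := by
    apply squeeze_zero_norm ?_ (tendsto_const_div_atTop_nhds_zero_nat 2)
    intro n
    have h1 := (hZr01 n).1
    have h2 := (hZr01 n).2
    have habs : |phi (1 - Zr n)| ≤ 2 := abs_phi_le_two (by linarith) (by linarith)
    rw [Real.norm_eq_abs, abs_div, abs_of_nonneg (show (0:ℝ) ≤ (n:ℝ) from Nat.cast_nonneg n),
      div_eq_mul_inv, div_eq_mul_inv]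
    exact mul_le_mul_of_nonneg_right habs (by positivity)
  -- term 2 : (Zr n * logb Ee)/n → 0
  have hlim2 : Tendsto (fun n : ℕ => (Zr n * Real.logb 2 (Ee p)) / n) atTop (𝓝 0) := by
    apply squeeze_zero_norm ?_ (tendsto_const_div_atTop_nhds_zero_nat (|Real.logb 2 (Ee p)|))
    intro n
    have h1 := (hZr01 n).1
    have h2 := (hZr01 n).2
    rw [Real.norm_eq_abs, abs_div, abs_of_nonneg (show (0:ℝ) ≤ (n:ℝ) from Nat.cast_nonneg n),
      div_eq_mul_inv, div_eq_mul_inv, abs_mul]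
    apply mul_le_mul_of_nonneg_right ?_ (by positivity)
    calc |Zr n| * |Real.logb 2 (Ee p)| ≤ 1 * |Real.logb 2 (Ee p)| := by
          apply mul_le_mul_of_nonneg_right ?_ (abs_nonneg _)
          rw [abs_of_nonneg h1]
          exact h2
      _ = |Real.logb 2 (Ee p)| := one_mul _
  -- term 3 : Cesàro
  have hlim3 : Tendsto (fun n : ℕ => (lam p * Sa n) / n) atTop (𝓝 0) := by
    have hu : Tendsto (fun a : ℕ => phi (rr p a)) atTop (𝓝 0) := by
      have hc : Tendsto phi (𝓝 0) (𝓝 (phi 0)) := continuous_phi.continuousAt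
      rw [phi_zero] at hc
      exact hc.comp (rr_tendsto hp0 hp00 hpsum hp1 hmean)
    have hces := hu.cesaro
    have : Tendsto (fun n : ℕ => lam p * ((n:ℝ)⁻¹ * Sa n)) atTop (𝓝 (lam p * 0)) :=
      hces.const_mul (lam p)
    rw [mul_zero] at this
    apply this.congr
    intro n
    rw [div_eq_mul_inv]
    ring
  -- main term
  have hsumphi : Summable (fun j => phi (p j)) := summable_phi_p hp0 hp00 hpsum hp1 hmean
  have hlim5 : Tendsto (fun n : ℕ => (lam p * Sj n) / n) atTop
      (𝓝 (lam p * ∑' j, phi (p j))) := by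
    have hpart : Tendsto (fun n : ℕ => ∑ j ∈ Finset.range n, phi (p j)) atTop
        (𝓝 (∑' j, phi (p j))) := hsumphi.hasSum.tendsto_sum_nat
    have hkron : Tendsto (fun n : ℕ => (∑ j ∈ Finset.range n, (j:ℝ) * phi (p j)) / n)
        atTop (𝓝 0) :=
      kronecker_aux (fun j => phi_nonneg (hp0 j) (p_le_one hp0 hp00 hpsum hp1 hmean j)) hsumphi
    have hg : Tendsto (fun n : ℕ => lam p * (∑ j ∈ Finset.range n, phi (p j))
        - lam p * ((∑ j ∈ Finset.range n, (j:ℝ) * phi (p j)) / n)) atTop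
        (𝓝 (lam p * ∑' j, phi (p j) - lam p * 0)) :=
      (hpart.const_mul (lam p)).sub (hkron.const_mul (lam p))
    rw [mul_zero, sub_zero] at hg
    apply hg.congr'
    filter_upwards [eventually_ge_atTop 1] with n hn
    have hnne : (n:ℝ) ≠ 0 := by
      have : (1:ℝ) ≤ (n:ℝ) := by exact_mod_cast hn
      linarith
    have hSjeq : Sj n = (n:ℝ) * (∑ j ∈ Finset.range n, phi (p j))
        - ∑ j ∈ Finset.range n, (j:ℝ) * phi (p j) := by
      simp only [hSj]
      rw [Finset.mul_sum, ← Finset.sum_sub_distrib]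
      apply Finset.sum_congr rfl
      intro j _
      ring
    rw [hSjeq]
    field_simp
  have htotal := (((hlim1.add hlim2).add hlim3).add hlim3).add hlim5
  rw [zero_add, zero_add, zero_add, zero_add] at htotal
  apply htotal.congr
  intro n
  rw [hdecomp n]

end final

end RenewalAux

/-- Entropy rate of a stationary binary renewal process: if the interarrival times are
i.i.d. with distribution `P = (p_j)` of finite mean, then the entropy rate of the binary
process equals `λ H(P)`, where `λ = 1/E(Y_1)` and `H(P) = −Σ_j p_j log p_j`.
The renewal structure is encoded by the cylinder-probability identity `hRen`:
the probability of a `1` at time `0` followed by `1`s exactly at the partial sums of the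
gaps `j_1, …, j_m` (up to time `j_1 + ⋯ + j_m`) is `λ ∏_i p_{j_i}`. -/
theorem stmt_9 (p : ℕ → ℝ) (hp0 : ∀ j, 0 ≤ p j) (hp00 : p 0 = 0)
    (hpsum : Summable p) (hp1 : ∑' j, p j = 1)
    (hmean : Summable fun j : ℕ => (j : ℝ) * p j)
    (μ : Measure (ℕ → Bool)) [IsProbabilityMeasure μ]
    (hstat : μ.map (fun ω n => ω (n + 1)) = μ)
    (hRen : ∀ (m : ℕ) (j : ℕ → ℕ), (∀ i < m, 1 ≤ j i) →
      μ {ω | ∀ t ≤ ∑ i ∈ Finset.range m, j i,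
          (ω t = true ↔ ∃ i ≤ m, t = ∑ i' ∈ Finset.range i, j i')} =
        ENNReal.ofReal ((∑' j' : ℕ, (j' : ℝ) * p j')⁻¹ * ∏ i ∈ Finset.range m, p (j i))) :
    Tendsto (fun n : ℕ => blockEntropyB μ n / n) atTop
      (𝓝 ((∑' j' : ℕ, (j' : ℝ) * p j')⁻¹ * (-∑' j', p j' * Real.logb 2 (p j')))) := by
  have h := RenewalAux.final_limit hp0 hp00 hpsum hp1 hmean hstat hRen
  have heq : (∑' j' : ℕ, (j' : ℝ) * p j')⁻¹ * (-∑' j', p j' * Real.logb 2 (p j'))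
      = RenewalAux.lam p * ∑' j, RenewalAux.phi (p j) := by
    rw [RenewalAux.lam, RenewalAux.Ee]
    congr 1
    rw [← tsum_neg]
    rfl
  rw [heq]
  exact h
end
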